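/- arXiv:2409.10261 — 3 statements merged into one kernel-verified Lean document; each statement's English description precedes it below -/
import Mathlib

section
/- Let q and k be positive integers with q ≥ 2 and k ≥ 2, and let G be a chordal graph of order n = q(k+1), minimum degree k, and size q·binomial(k+1,2). Then G is isomorphic to the disjoint union of q copies of the complete graph K_{k+1}; in particular, every connected component of G is a complete graph on k+1 vertices and G is disconnected. -/
open scoped Classical

/-- A graph is chordal if every cycle of length greater than three has a chord, i.e.,
an edge joining two vertices of the cycle that is not itself an edge of the cycle. -/
def SimpleGraph.IsChordal {V : Type*} (G : SimpleGraph V) : Prop :=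
  ∀ ⦃v : V⦄ (w : G.Walk v v), w.IsCycle → 3 < w.length →
    ∃ a b : V, G.Adj a b ∧ a ∈ w.support ∧ b ∈ w.support ∧ s(a, b) ∉ w.edges

/-- The disjoint union `q K_s` of `q` pairwise vertex-disjoint copies of the complete graph
`K_s`: two vertices are adjacent iff they are distinct and lie in the same copy. -/
def copiesOfComplete (q s : ℕ) : SimpleGraph (Fin q × Fin s) where
  Adj x y := x.1 = y.1 ∧ x ≠ y
  symm := ⟨fun _ _ h => ⟨h.1.symm, h.2.symm⟩⟩
  loopless := ⟨fun _ h => h.2 rfl⟩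

namespace Aux

open SimpleGraph

universe u

variable {V : Type u} {G : SimpleGraph V}

def Simplicial (G : SimpleGraph V) (v : V) : Prop :=
  ∀ ⦃x y : V⦄, G.Adj v x → G.Adj v y → x ≠ y → G.Adj x y

lemma walk_closure {T : Set V} {C : Set V}
    (hC : ∀ v ∈ C, ∀ u, G.Adj v u → u ∉ T → u ∈ C) :
    ∀ {a b : V} (w : G.Walk a b), a ∈ C → (∀ x ∈ w.support, x ∉ T) → b ∈ C := by
  intro a b w
  induction w with
  | nil => exact fun h _ => h
  | cons h p ih =>
    intro ha hsup
    rename_i u v c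
    refine ih (hC _ ha _ h ?_) ?_
    · exact hsup v (by simp)
    · intro x hx; exact hsup x (by simp [hx])

lemma reachable_induce {U : Set V} :
    ∀ {a b : V} (w : G.Walk a b) (_ : ∀ x ∈ w.support, x ∈ U)
    (ha : a ∈ U) (hb : b ∈ U), (G.induce U).Reachable ⟨a, ha⟩ ⟨b, hb⟩ := by
  intro a b w
  induction w with
  | nil => intro _ ha hb; rfl
  | cons h p ih =>
    rename_i u v c
    intro hsup ha hb
    have hv : v ∈ U := hsup v (by simp)
    exact (SimpleGraph.Adj.reachable (by exact h : (G.induce U).Adj ⟨u, ha⟩ ⟨v, hv⟩)).trans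
      (ih (fun x hx => hsup x (by simp [hx])) hv hb)

/-- A chord on a walk gives a strictly shorter walk with support inside the old one. -/
lemma exists_shorter_of_chord' :
    ∀ {u v x y : V} (p : G.Walk u v), x ∈ p.support → y ∈ p.support →
    G.Adj x y → s(x, y) ∉ p.edges →
    ∃ q : G.Walk u v, q.length < p.length := by
  intro u v x y p
  induction p with
  | nil =>
    intro hx hy hadj _
    simp only [SimpleGraph.Walk.support_nil, List.mem_singleton] at hx hy
    exact absurd hadj (by subst hx; subst hy; exact G.irrefl)
  | cons h p ih =>
    rename_i a b c
    intro hx hy hadj hne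
    -- support of cons = a :: p.support
    rw [SimpleGraph.Walk.support_cons, List.mem_cons] at hx hy
    simp only [SimpleGraph.Walk.edges_cons, List.mem_cons] at hne
    push_neg at hne
    obtain ⟨hne1, hne2⟩ := hne
    -- helper for case x = a, y ∈ p.support
    have main : ∀ {x y : V}, x = a → y ∈ p.support → G.Adj x y → s(x, y) ≠ s(a, b) →
        ∃ q : G.Walk a c, q.length < (SimpleGraph.Walk.cons h p).length := by
      intro x y hxa hy' hadj' hne1'
      subst hxa
      have hyb : y ≠ b := by
        rintro rfl; exact hne1' rfl
      -- drop until y in p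
      have hslen : (p.takeUntil y hy').length + (p.dropUntil y hy').length = p.length := by
        have := SimpleGraph.Walk.take_spec p hy'
        calc (p.takeUntil y hy').length + (p.dropUntil y hy').length
            = ((p.takeUntil y hy').append (p.dropUntil y hy')).length :=
              (SimpleGraph.Walk.length_append _ _).symm
          _ = p.length := by rw [this]
      have htpos : 0 < (p.takeUntil y hy').length := by
        rcases Nat.eq_zero_or_pos (p.takeUntil y hy').length with h0 | h0
        · exact absurd (SimpleGraph.Walk.eq_of_length_eq_zero h0) (Ne.symm hyb)
        · exact h0
      refine ⟨SimpleGraph.Walk.cons hadj' (p.dropUntil y hy'), ?_⟩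
      simp only [SimpleGraph.Walk.length_cons]
      omega
    rcases hx with hxa | hxp
    · rcases hy with hya | hyp
      · exact absurd hadj (by rw [hxa, hya]; exact G.irrefl)
      · exact main hxa hyp hadj hne1
    · rcases hy with hya | hyp
      · obtain ⟨q, hq⟩ := main hya hxp hadj.symm (by rw [Sym2.eq_swap]; exact hne1)
        exact ⟨q, hq⟩
      · obtain ⟨q, hq⟩ := ih hxp hyp hadj hne2
        exact ⟨SimpleGraph.Walk.cons h q, by simpa using hq⟩

lemma isChordal_induce (hc : G.IsChordal) (U : Set V) : (G.induce U).IsChordal := by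
  intro v w hcyc hlen
  set f : G.induce U ↪g G := SimpleGraph.Embedding.induce U with hf
  have hinj : Function.Injective f := f.injective
  have hcyc' : (w.map f.toHom).IsCycle := hcyc.map hinj
  have hlen' : 3 < (w.map f.toHom).length := by rwa [SimpleGraph.Walk.length_map]
  obtain ⟨a, b, hadj, ha, hb, hedge⟩ := hc (w.map f.toHom) hcyc' hlen'
  rw [SimpleGraph.Walk.support_map, List.mem_map] at ha hb
  obtain ⟨a', ha', rfl⟩ := ha
  obtain ⟨b', hb', rfl⟩ := hb
  refine ⟨a', b', ?_, ha', hb', ?_⟩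
  · exact hadj
  · intro hmem
    apply hedge
    rw [SimpleGraph.Walk.edges_map, List.mem_map]
    exact ⟨s(a', b'), hmem, by simp⟩

lemma shortest_side {U : Set V} {s t : V} {hs : s ∈ U} {ht : t ∈ U}
    (P : (G.induce U).Walk ⟨s, hs⟩ ⟨t, ht⟩)
    (hPdist : P.length = (G.induce U).dist ⟨s, hs⟩ ⟨t, ht⟩)
    {x y : V}
    (hx : x ∈ (P.map (SimpleGraph.Embedding.induce U).toHom).support)
    (hy : y ∈ (P.map (SimpleGraph.Embedding.induce U).toHom).support)
    (hadj : G.Adj x y)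
    (hne : s(x, y) ∉ (P.map (SimpleGraph.Embedding.induce U).toHom).edges) : False := by
  rw [SimpleGraph.Walk.support_map, List.mem_map] at hx hy
  obtain ⟨x', hx', rfl⟩ := hx
  obtain ⟨y', hy', rfl⟩ := hy
  have hadj' : (G.induce U).Adj x' y' := hadj
  have hne' : s(x', y') ∉ P.edges := by
    intro hmem
    apply hne
    rw [SimpleGraph.Walk.edges_map, List.mem_map]
    exact ⟨s(x', y'), hmem, by simp⟩
  obtain ⟨q, hq⟩ := exists_shorter_of_chord' P hx' hy' hadj' hne'
  have := SimpleGraph.dist_le q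
  omega

lemma clique_step (hch : G.IsChordal) {A B : Set V} {s t : V}
    (hsA : s ∉ A) (htA : t ∉ A) (hsB : s ∉ B) (htB : t ∉ B)
    (hAB : ∀ x, x ∈ A → x ∈ B → False)
    (hABadj : ∀ x ∈ A, ∀ y ∈ B, ¬ G.Adj x y)
    (hst : s ≠ t) (hnadj : ¬ G.Adj s t)
    (hreachA : (G.induce (A ∪ {s, t})).Reachable ⟨s, by simp⟩ ⟨t, by simp⟩)
    (hreachB : (G.induce (B ∪ {s, t})).Reachable ⟨s, by simp⟩ ⟨t, by simp⟩) : False := by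
  classical
  set UA : Set V := A ∪ {s, t} with hUA
  set UB : Set V := B ∪ {s, t} with hUB
  obtain ⟨PA, hPApath, hPAdist⟩ := hreachA.exists_path_of_dist
  obtain ⟨PB, hPBpath, hPBdist⟩ := hreachB.exists_path_of_dist
  set fA := (SimpleGraph.Embedding.induce UA).toHom with hfA
  set fB := (SimpleGraph.Embedding.induce UB).toHom with hfB
  have hfAinj : Function.Injective fA := Subtype.val_injective
  have hfBinj : Function.Injective fB := Subtype.val_injective
  set pm : G.Walk s t := PA.map fA with hpm
  set qm : G.Walk s t := PB.map fB with hqm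
  have hpm_path : pm.IsPath := SimpleGraph.Walk.map_isPath_of_injective hfAinj hPApath
  have hqm_path : qm.IsPath := SimpleGraph.Walk.map_isPath_of_injective hfBinj hPBpath
  have hpm_supp : ∀ x ∈ pm.support, x ∈ UA := by
    intro x hx
    have hx' : x ∈ (PA.map fA).support := hx
    rw [SimpleGraph.Walk.support_map, List.mem_map] at hx'
    obtain ⟨x', _, rfl⟩ := hx'
    exact x'.2
  have hqm_supp : ∀ x ∈ qm.support, x ∈ UB := by
    intro x hx
    have hx' : x ∈ (PB.map fB).support := hx
    rw [SimpleGraph.Walk.support_map, List.mem_map] at hx'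
    obtain ⟨x', _, rfl⟩ := hx'
    exact x'.2
  -- membership in UA not in {s,t} means in A
  have hmemA : ∀ x, x ∈ UA → x ≠ s → x ≠ t → x ∈ A := by
    intro x hx hxs hxt
    rcases hx with h | h
    · exact h
    · rcases h with h | h
      · exact absurd h hxs
      · exact absurd h hxt
  have hmemB : ∀ x, x ∈ UB → x ≠ s → x ≠ t → x ∈ B := by
    intro x hx hxs hxt
    rcases hx with h | h
    · exact h
    · rcases h with h | h
      · exact absurd h hxs
      · exact absurd h hxt
  -- lengths
  have hdist2 : ∀ {U : Set V} (hs' : s ∈ U) (ht' : t ∈ U),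
      (G.induce U).Reachable ⟨s, hs'⟩ ⟨t, ht'⟩ → 2 ≤ (G.induce U).dist ⟨s, hs'⟩ ⟨t, ht'⟩ := by
    intro U hs' ht' hr
    have h0 : 0 < (G.induce U).dist ⟨s, hs'⟩ ⟨t, ht'⟩ :=
      hr.pos_dist_of_ne (fun h => hst (congrArg Subtype.val h))
    have h1 : (G.induce U).dist ⟨s, hs'⟩ ⟨t, ht'⟩ ≠ 1 := by
      intro h
      exact hnadj (SimpleGraph.dist_eq_one_iff_adj.mp h : (G.induce U).Adj _ _)
    omega
  have hpm_len : 2 ≤ pm.length := by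
    have hl : pm.length = PA.length := SimpleGraph.Walk.length_map fA PA
    rw [hl, hPAdist]
    exact hdist2 _ _ hreachA
  have hqm_len : 2 ≤ qm.length := by
    have hl : qm.length = PB.length := SimpleGraph.Walk.length_map fB PB
    rw [hl, hPBdist]
    exact hdist2 _ _ hreachB
  -- the cycle
  set c : G.Walk s s := pm.append qm.reverse with hc
  have hclen : c.length = pm.length + qm.length := by
    rw [hc, SimpleGraph.Walk.length_append, SimpleGraph.Walk.length_reverse]
  -- membership in c.support
  have hcsupp : ∀ x ∈ c.support, x ∈ pm.support ∨ x ∈ qm.support := by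
    intro x hx
    rw [hc, SimpleGraph.Walk.support_append, List.mem_append] at hx
    rcases hx with h | h
    · exact Or.inl h
    · right
      have := List.mem_of_mem_tail h
      rw [SimpleGraph.Walk.support_reverse, List.mem_reverse] at this
      exact this
  -- edges disjointness
  have hedge_disj : ∀ e ∈ pm.edges, e ∈ qm.edges → False := by
    intro e he1 he2
    induction e with
    | h x y =>
      have hadj := SimpleGraph.Walk.adj_of_mem_edges pm he1
      have hx1 : x ∈ pm.support := SimpleGraph.Walk.fst_mem_support_of_mem_edges pm he1
      have hy1 : y ∈ pm.support := SimpleGraph.Walk.snd_mem_support_of_mem_edges pm he1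
      have hx2 : x ∈ qm.support := SimpleGraph.Walk.fst_mem_support_of_mem_edges qm he2
      have hy2 : y ∈ qm.support := SimpleGraph.Walk.snd_mem_support_of_mem_edges qm he2
      have hxst : x = s ∨ x = t := by
        by_contra hcon
        push_neg at hcon
        exact hAB x (hmemA x (hpm_supp x hx1) hcon.1 hcon.2)
          (hmemB x (hqm_supp x hx2) hcon.1 hcon.2)
      have hyst : y = s ∨ y = t := by
        by_contra hcon
        push_neg at hcon
        exact hAB y (hmemA y (hpm_supp y hy1) hcon.1 hcon.2)
          (hmemB y (hqm_supp y hy2) hcon.1 hcon.2)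
      rcases hxst with rfl | rfl <;> rcases hyst with rfl | rfl
      · exact G.irrefl hadj
      · exact hnadj hadj
      · exact hnadj hadj.symm
      · exact G.irrefl hadj
  have hccycle : c.IsCycle := by
    rw [SimpleGraph.Walk.isCycle_def]
    refine ⟨⟨?_⟩, ?_, ?_⟩
    · -- edges nodup
      rw [hc, SimpleGraph.Walk.edges_append, SimpleGraph.Walk.edges_reverse]
      rw [List.nodup_append]
      refine ⟨hpm_path.isTrail.edges_nodup, (List.nodup_reverse).mpr hqm_path.isTrail.edges_nodup, ?_⟩
      intro e he1 e' he2 hee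
      subst hee
      exact hedge_disj e he1 ((List.mem_reverse).mp he2)
    · -- ne nil
      intro h
      have : c.length = 0 := by rw [h]; rfl
      omega
    · -- support tail nodup
      have hsplit : c.support.tail = pm.support.tail ++ qm.reverse.support.tail := by
        rw [hc, SimpleGraph.Walk.support_append,
          List.tail_append_of_ne_nil (SimpleGraph.Walk.support_ne_nil _)]
      rw [hsplit, List.nodup_append]
      have hpmtail : ∀ x ∈ pm.support.tail, x ∈ pm.support ∧ x ≠ s := by
        intro x hx
        constructor
        · exact List.mem_of_mem_tail hx
        · intro rfl1
          subst rfl1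
          have := hpm_path.support_nodup
          rw [SimpleGraph.Walk.support_eq_cons pm] at this
          exact (List.nodup_cons.mp this).1 hx
      have hqmtail : ∀ x ∈ qm.reverse.support.tail, x ∈ qm.support ∧ x ≠ t := by
        intro x hx
        constructor
        · have := List.mem_of_mem_tail hx
          rw [SimpleGraph.Walk.support_reverse, List.mem_reverse] at this
          exact this
        · intro rfl1
          subst rfl1
          have := hqm_path.reverse.support_nodup
          rw [SimpleGraph.Walk.support_eq_cons qm.reverse] at this
          exact (List.nodup_cons.mp this).1 hx
      refine ⟨?_, ?_, ?_⟩
      · exact List.Sublist.nodup (List.tail_sublist _) hpm_path.support_nodup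
      · exact List.Sublist.nodup (List.tail_sublist _) hqm_path.reverse.support_nodup
      · intro x hx1 x' hx2 hxx
        subst hxx
        obtain ⟨hx1s, hxs⟩ := hpmtail x hx1
        obtain ⟨hx2s, hxt⟩ := hqmtail x hx2
        have h1 : x ∈ UA := hpm_supp x hx1s
        have h2 : x ∈ UB := hqm_supp x hx2s
        by_cases hxt2 : x = t
        · exact hxt hxt2
        · exact hAB x (hmemA x h1 hxs hxt2) (hmemB x h2 hxs hxt2)
  -- apply chordality
  obtain ⟨x, y, hadj, hxs, hys, hnedge⟩ := hch c hccycle (by omega)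
  have hxc := hcsupp x hxs
  have hyc := hcsupp y hys
  have hpm_edges_sub : ∀ e ∈ pm.edges, e ∈ c.edges := by
    intro e he
    rw [hc, SimpleGraph.Walk.edges_append, List.mem_append]
    exact Or.inl he
  have hqm_edges_sub : ∀ e ∈ qm.edges, e ∈ c.edges := by
    intro e he
    rw [hc, SimpleGraph.Walk.edges_append, List.mem_append]
    right
    rw [SimpleGraph.Walk.edges_reverse, List.mem_reverse]
    exact he
  -- case analysis
  have hs_pm : s ∈ pm.support := pm.start_mem_support
  have ht_pm : t ∈ pm.support := pm.end_mem_support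
  have hs_qm : s ∈ qm.support := qm.start_mem_support
  have ht_qm : t ∈ qm.support := qm.end_mem_support
  by_cases hxy_pm : x ∈ pm.support ∧ y ∈ pm.support
  · refine shortest_side PA hPAdist ?_ ?_ hadj ?_
    · rw [← hfA, ← hpm]; exact hxy_pm.1
    · rw [← hfA, ← hpm]; exact hxy_pm.2
    · rw [← hfA, ← hpm]; intro hmem; exact hnedge (hpm_edges_sub _ hmem)
  by_cases hxy_qm : x ∈ qm.support ∧ y ∈ qm.support
  · refine shortest_side PB hPBdist ?_ ?_ hadj ?_
    · rw [← hfB, ← hqm]; exact hxy_qm.1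
    · rw [← hfB, ← hqm]; exact hxy_qm.2
    · rw [← hfB, ← hqm]; intro hmem; exact hnedge (hqm_edges_sub _ hmem)
  -- mixed case
  rcases hxc with hxpm | hxqm
  · have hyqm : y ∈ qm.support := by
      rcases hyc with h | h
      · exact absurd ⟨hxpm, h⟩ hxy_pm
      · exact h
    have hxnq : x ∉ qm.support := fun h => hxy_qm ⟨h, hyqm⟩
    have hynp : y ∉ pm.support := fun h => hxy_pm ⟨hxpm, h⟩
    have hxA : x ∈ A := hmemA x (hpm_supp x hxpm)
      (fun h => hxnq (h ▸ hs_qm)) (fun h => hxnq (h ▸ ht_qm))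
    have hyB : y ∈ B := hmemB y (hqm_supp y hyqm)
      (fun h => hynp (h ▸ hs_pm)) (fun h => hynp (h ▸ ht_pm))
    exact hABadj x hxA y hyB hadj
  · have hypm : y ∈ pm.support := by
      rcases hyc with h | h
      · exact h
      · exact absurd ⟨hxqm, h⟩ hxy_qm
    have hxnp : x ∉ pm.support := fun h => hxy_pm ⟨h, hypm⟩
    have hynq : y ∉ qm.support := fun h => hxy_qm ⟨hxqm, h⟩
    have hyA : y ∈ A := hmemA y (hpm_supp y hypm)
      (fun h => hynq (h ▸ hs_qm)) (fun h => hynq (h ▸ ht_qm))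
    have hxB : x ∈ B := hmemB x (hqm_supp x hxqm)
      (fun h => hxnp (h ▸ hs_pm)) (fun h => hxnp (h ▸ ht_pm))
    exact hABadj y hyA x hxB hadj.symm

lemma dirac : ∀ (n : ℕ) {V : Type u} [Fintype V] (G : SimpleGraph V),
    Fintype.card V ≤ n → G.IsChordal →
    (∀ x y : V, x ≠ y → G.Adj x y) ∨
    ∃ a b : V, ¬ G.Adj a b ∧ a ≠ b ∧ Simplicial G a ∧ Simplicial G b := by
  intro n
  induction n with
  | zero =>
    intro V _ G hcard _
    left
    have hem : IsEmpty V := by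
      rw [← Fintype.card_eq_zero_iff]; omega
    exact fun x => (hem.false x).elim
  | succ n ih =>
    intro V _ G hcard hch
    by_cases hcomp : ∀ x y : V, x ≠ y → G.Adj x y
    · exact Or.inl hcomp
    push_neg at hcomp
    obtain ⟨a, b, hab, hnadj⟩ := hcomp
    right
    -- separators
    set Sep : Finset V → Prop :=
      fun S => a ∉ S ∧ b ∉ S ∧ ∀ w : G.Walk a b, ∃ x ∈ w.support, x ∈ S with hSepdef
    have hS0 : Sep (Finset.univ \ {a, b}) := by
      refine ⟨by simp, by simp, ?_⟩
      intro w
      cases w with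
      | nil => exact absurd rfl hab
      | cons h p =>
        rename_i v
        have hva : v ≠ a := fun hv => G.irrefl (hv ▸ h)
        have hvb : v ≠ b := fun hv => hnadj (hv ▸ h)
        exact ⟨v, by simp, by simp [hva, hvb]⟩
    obtain ⟨S, hSmem, hSmin⟩ :=
      Finset.exists_min_image (Finset.univ.filter Sep) Finset.card
        ⟨_, Finset.mem_filter.mpr ⟨Finset.mem_univ _, hS0⟩⟩
    have hSep : Sep S := (Finset.mem_filter.mp hSmem).2
    obtain ⟨haS, hbS, hSsep⟩ := hSep
    have hSmin' : ∀ S' : Finset V, Sep S' → S.card ≤ S'.card := fun S' h =>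
      hSmin S' (Finset.mem_filter.mpr ⟨Finset.mem_univ _, h⟩)
    -- the two sides
    set A : Set V := {v | ∃ w : G.Walk a v, ∀ x ∈ w.support, x ∉ S} with hAdef
    set B : Set V := {v | ∃ w : G.Walk b v, ∀ x ∈ w.support, x ∉ S} with hBdef
    have haA : a ∈ A := ⟨SimpleGraph.Walk.nil, by simpa using haS⟩
    have hbB : b ∈ B := ⟨SimpleGraph.Walk.nil, by simpa using hbS⟩
    have hAS : ∀ v ∈ A, v ∉ (S : Finset V) := by
      rintro v ⟨w, hw⟩
      exact hw v w.end_mem_support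
    have hBS : ∀ v ∈ B, v ∉ (S : Finset V) := by
      rintro v ⟨w, hw⟩
      exact hw v w.end_mem_support
    have hclosedA : ∀ v ∈ A, ∀ u, G.Adj v u → u ∉ (S : Finset V) → u ∈ A := by
      rintro v ⟨w, hw⟩ u hadj huS
      refine ⟨w.concat hadj, ?_⟩
      intro x hx
      rw [SimpleGraph.Walk.support_concat, List.mem_append] at hx
      rcases hx with hx | hx
      · exact hw x hx
      · rw [List.mem_singleton] at hx; exact hx ▸ huS
    have hclosedB : ∀ v ∈ B, ∀ u, G.Adj v u → u ∉ (S : Finset V) → u ∈ B := by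
      rintro v ⟨w, hw⟩ u hadj huS
      refine ⟨w.concat hadj, ?_⟩
      intro x hx
      rw [SimpleGraph.Walk.support_concat, List.mem_append] at hx
      rcases hx with hx | hx
      · exact hw x hx
      · rw [List.mem_singleton] at hx; exact hx ▸ huS
    have hsuppA : ∀ {v : V} (w : G.Walk a v), (∀ x ∈ w.support, x ∉ S) →
        ∀ x ∈ w.support, x ∈ A := by
      intro v w hw x hx
      exact ⟨w.takeUntil x hx, fun y hy => hw y (SimpleGraph.Walk.support_takeUntil_subset w hx hy)⟩
    have hsuppB : ∀ {v : V} (w : G.Walk b v), (∀ x ∈ w.support, x ∉ S) →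
        ∀ x ∈ w.support, x ∈ B := by
      intro v w hw x hx
      exact ⟨w.takeUntil x hx, fun y hy => hw y (SimpleGraph.Walk.support_takeUntil_subset w hx hy)⟩
    have hAB : ∀ x, x ∈ A → x ∈ B → False := by
      rintro x ⟨wa, hwa⟩ ⟨wb, hwb⟩
      obtain ⟨z, hz1, hz2⟩ := hSsep (wa.append wb.reverse)
      rw [SimpleGraph.Walk.support_append, List.mem_append] at hz1
      rcases hz1 with h | h
      · exact hwa z h hz2
      · exact hwb z (by
          have := List.mem_of_mem_tail h
          rwa [SimpleGraph.Walk.support_reverse, List.mem_reverse] at this) hz2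
    have hbA : b ∉ A := by
      rintro ⟨w, hw⟩
      obtain ⟨z, hz1, hz2⟩ := hSsep w
      exact hw z hz1 hz2
    have haB : a ∉ B := by
      rintro ⟨w, hw⟩
      obtain ⟨z, hz1, hz2⟩ := hSsep w.reverse
      rw [SimpleGraph.Walk.support_reverse, List.mem_reverse] at hz1
      exact hw z hz1 hz2
    have hABadj : ∀ x ∈ A, ∀ y ∈ B, ¬ G.Adj x y := by
      intro x hx y hy hadj
      by_cases hyS : y ∈ S
      · exact hBS y hy hyS
      · exact hAB y (hclosedA x hx y hadj hyS) hy
    -- minimality: neighbors in both sides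
    have hnbrA : ∀ s ∈ S, ∃ u ∈ A, G.Adj s u := by
      intro s hs
      by_contra hno
      push_neg at hno
      have hSep' : Sep (S.erase s) := by
        refine ⟨fun h => haS (Finset.mem_of_mem_erase h),
          fun h => hbS (Finset.mem_of_mem_erase h), ?_⟩
        intro w
        by_contra hcon
        push_neg at hcon
        have hbA' : b ∈ A := by
          refine walk_closure (T := ((S.erase s : Finset V) : Set V)) ?_ w haA ?_
          · intro v hv u hadj huS
            by_cases hus : u = s
            · exact (by subst hus; exact absurd hadj.symm (hno v hv))
            · refine hclosedA v hv u hadj (fun h => huS ?_)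
              exact Finset.mem_coe.mpr (Finset.mem_erase.mpr ⟨hus, h⟩)
          · intro x hx
            exact fun h => hcon x hx (Finset.mem_coe.mp h)
        exact hbA hbA'
      have := hSmin' _ hSep'
      have := Finset.card_erase_lt_of_mem hs
      omega
    have hnbrB : ∀ s ∈ S, ∃ u ∈ B, G.Adj s u := by
      intro s hs
      by_contra hno
      push_neg at hno
      have hSep' : Sep (S.erase s) := by
        refine ⟨fun h => haS (Finset.mem_of_mem_erase h),
          fun h => hbS (Finset.mem_of_mem_erase h), ?_⟩
        intro w
        by_contra hcon
        push_neg at hcon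
        have haB' : a ∈ B := by
          refine walk_closure (T := ((S.erase s : Finset V) : Set V)) ?_ w.reverse hbB ?_
          · intro v hv u hadj huS
            by_cases hus : u = s
            · exact (by subst hus; exact absurd hadj.symm (hno v hv))
            · refine hclosedB v hv u hadj (fun h => huS ?_)
              exact Finset.mem_coe.mpr (Finset.mem_erase.mpr ⟨hus, h⟩)
          · intro x hx
            rw [SimpleGraph.Walk.support_reverse, List.mem_reverse] at hx
            exact fun h => hcon x hx (Finset.mem_coe.mp h)
        exact haB haB'
      have := hSmin' _ hSep'
      have := Finset.card_erase_lt_of_mem hs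
      omega
    -- S is a clique
    have hclique : ∀ s ∈ S, ∀ t ∈ S, s ≠ t → G.Adj s t := by
      intro s hs t ht hst
      by_contra hnadjst
      obtain ⟨a1, ha1A, ha1⟩ := hnbrA s hs
      obtain ⟨a2, ha2A, ha2⟩ := hnbrA t ht
      obtain ⟨b1, hb1B, hb1⟩ := hnbrB s hs
      obtain ⟨b2, hb2B, hb2⟩ := hnbrB t ht
      have hsA : s ∉ A := fun h => hAS s h hs
      have htA : t ∉ A := fun h => hAS t h ht
      have hsB : s ∉ B := fun h => hBS s h hs
      have htB : t ∉ B := fun h => hBS t h ht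
      refine clique_step hch hsA htA hsB htB hAB hABadj hst hnadjst ?_ ?_
      · -- reachability in A-side
        obtain ⟨wa1, hwa1⟩ := ha1A
        obtain ⟨wa2, hwa2⟩ := ha2A
        have hr12 : (G.induce (A ∪ {s, t})).Reachable
            ⟨a1, Or.inl (hsuppA wa1 hwa1 a1 wa1.end_mem_support)⟩
            ⟨a2, Or.inl (hsuppA wa2 hwa2 a2 wa2.end_mem_support)⟩ := by
          refine reachable_induce (wa1.reverse.append wa2) ?_ _ _
          intro x hx
          rw [SimpleGraph.Walk.support_append, List.mem_append] at hx
          rcases hx with h | h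
          · rw [SimpleGraph.Walk.support_reverse, List.mem_reverse] at h
            exact Or.inl (hsuppA wa1 hwa1 x h)
          · exact Or.inl (hsuppA wa2 hwa2 x (List.mem_of_mem_tail h))
        have hadj1 : (G.induce (A ∪ {s, t})).Adj ⟨s, by simp⟩
            ⟨a1, Or.inl (hsuppA wa1 hwa1 a1 wa1.end_mem_support)⟩ := ha1
        have hadj2 : (G.induce (A ∪ {s, t})).Adj
            ⟨a2, Or.inl (hsuppA wa2 hwa2 a2 wa2.end_mem_support)⟩ ⟨t, by simp⟩ := ha2.symm
        exact hadj1.reachable.trans (hr12.trans hadj2.reachable)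
      · -- reachability in B-side
        obtain ⟨wb1, hwb1⟩ := hb1B
        obtain ⟨wb2, hwb2⟩ := hb2B
        have hr12 : (G.induce (B ∪ {s, t})).Reachable
            ⟨b1, Or.inl (hsuppB wb1 hwb1 b1 wb1.end_mem_support)⟩
            ⟨b2, Or.inl (hsuppB wb2 hwb2 b2 wb2.end_mem_support)⟩ := by
          refine reachable_induce (wb1.reverse.append wb2) ?_ _ _
          intro x hx
          rw [SimpleGraph.Walk.support_append, List.mem_append] at hx
          rcases hx with h | h
          · rw [SimpleGraph.Walk.support_reverse, List.mem_reverse] at h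
            exact Or.inl (hsuppB wb1 hwb1 x h)
          · exact Or.inl (hsuppB wb2 hwb2 x (List.mem_of_mem_tail h))
        have hadj1 : (G.induce (B ∪ {s, t})).Adj ⟨s, by simp⟩
            ⟨b1, Or.inl (hsuppB wb1 hwb1 b1 wb1.end_mem_support)⟩ := hb1
        have hadj2 : (G.induce (B ∪ {s, t})).Adj
            ⟨b2, Or.inl (hsuppB wb2 hwb2 b2 wb2.end_mem_support)⟩ ⟨t, by simp⟩ := hb2.symm
        exact hadj1.reachable.trans (hr12.trans hadj2.reachable)
    -- the side recursion
    have side : ∀ (C : Set V) (c w : V), c ∈ C → w ∉ C → w ∉ (S : Finset V) →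
        (∀ v ∈ C, v ∉ (S : Finset V)) →
        (∀ v ∈ C, ∀ u, G.Adj v u → u ∉ (S : Finset V) → u ∈ C) →
        ∃ z ∈ C, Simplicial G z := by
      intro C c w hcC hwC hwS hCS hclosedC
      set U : Set V := C ∪ ↑S with hUdef
      have hnbrU : ∀ v ∈ C, ∀ u, G.Adj v u → u ∈ U := by
        intro v hv u hadj
        by_cases huS : u ∈ S
        · exact Or.inr huS
        · exact Or.inl (hclosedC v hv u hadj huS)
      have hwU : w ∉ U := by
        intro h
        rcases h with h | h
        · exact hwC h
        · exact hwS h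
      have hcardU : Fintype.card U ≤ n := by
        have h2 : Fintype.card U < Fintype.card V := by
          refine Fintype.card_lt_of_injective_of_notMem (Subtype.val : U → V)
            Subtype.val_injective (b := w) ?_
          rintro ⟨⟨x, hx⟩, rfl⟩
          exact hwU hx
        omega
      have hchU : (G.induce U).IsChordal := isChordal_induce hch U
      have transfer : ∀ γ : U, (γ : V) ∈ C → Simplicial (G.induce U) γ → Simplicial G γ := by
        intro γ hγ hsimp x y hx hy hxy
        have hxU : x ∈ U := hnbrU _ hγ x hx
        have hyU : y ∈ U := hnbrU _ hγ y hy
        have : (G.induce U).Adj ⟨x, hxU⟩ ⟨y, hyU⟩ := by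
          refine hsimp (by exact hx) (by exact hy) ?_
          exact fun h => hxy (congrArg Subtype.val h)
        exact this
      rcases ih (G.induce U) hcardU hchU with hcompl | ⟨α, β, hnadj', hne', hsα, hsβ⟩
      · refine ⟨c, hcC, ?_⟩
        refine transfer ⟨c, Or.inl hcC⟩ hcC ?_
        intro x y hx hy hxy
        exact hcompl x y hxy
      · have hor : (α : V) ∈ C ∨ (β : V) ∈ C := by
          by_contra hcon
          push_neg at hcon
          have hαS : (α : V) ∈ S := by
            rcases α.2 with h | h
            · exact absurd h hcon.1
            · exact h
          have hβS : (β : V) ∈ S := by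
            rcases β.2 with h | h
            · exact absurd h hcon.2
            · exact h
          have : G.Adj α β := hclique _ hαS _ hβS (fun h => hne' (Subtype.ext h))
          exact hnadj' this
        rcases hor with h | h
        · exact ⟨α, h, transfer α h hsα⟩
        · exact ⟨β, h, transfer β h hsβ⟩
    obtain ⟨zA, hzA, hsimpA⟩ := side A a b haA hbA hbS hAS hclosedA
    obtain ⟨zB, hzB, hsimpB⟩ := side B b a hbB haB haS hBS hclosedB
    exact ⟨zA, zB, hABadj zA hzA zB hzB, fun h => hAB zA hzA (h ▸ hzB), hsimpA, hsimpB⟩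

lemma closed_nbhd [Fintype V] {k : ℕ} (hk : 1 ≤ k) (hdeg : ∀ v, G.degree v = k) {w u : V}
    (hs : Simplicial G w) (hu : G.Adj w u) :
    insert u (G.neighborFinset u) = insert w (G.neighborFinset w) := by
  have hmem : u ∈ G.neighborFinset w := by rwa [SimpleGraph.mem_neighborFinset]
  have hw_not : w ∉ (G.neighborFinset w).erase u := fun h =>
    G.irrefl ((G.mem_neighborFinset _ _).mp (Finset.mem_of_mem_erase h))
  have hsub : insert w ((G.neighborFinset w).erase u) ⊆ G.neighborFinset u := by
    intro x hx
    rcases Finset.mem_insert.mp hx with rfl | hx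
    · rw [SimpleGraph.mem_neighborFinset]; exact hu.symm
    · obtain ⟨hxu, hxw⟩ := Finset.mem_erase.mp hx
      rw [SimpleGraph.mem_neighborFinset] at hxw ⊢
      exact hs hu hxw (Ne.symm hxu)
  have hcard : (insert w ((G.neighborFinset w).erase u)).card = k := by
    rw [Finset.card_insert_of_notMem hw_not, Finset.card_erase_of_mem hmem]
    have := hdeg w
    rw [SimpleGraph.degree] at this
    omega
  have heq : insert w ((G.neighborFinset w).erase u) = G.neighborFinset u := by
    refine Finset.eq_of_subset_of_card_le hsub ?_
    rw [hcard]
    have := hdeg u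
    rw [SimpleGraph.degree] at this
    omega
  calc insert u (G.neighborFinset u)
      = insert u (insert w ((G.neighborFinset w).erase u)) := by rw [heq]
    _ = insert w (insert u ((G.neighborFinset w).erase u)) := Finset.insert_comm _ _ _
    _ = insert w (G.neighborFinset w) := by rw [Finset.insert_erase hmem]

lemma comp_structure [Fintype V] (hch : G.IsChordal) {k : ℕ} (hk : 1 ≤ k)
    (hdeg : ∀ v, G.degree v = k) (c : G.ConnectedComponent) :
    c.supp.ncard = k + 1 ∧ ∀ x ∈ c.supp, ∀ y ∈ c.supp, x ≠ y → G.Adj x y := by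
  obtain ⟨v, rfl⟩ := c.exists_rep
  set U : Set V := (G.connectedComponentMk v).supp with hUdef
  have hUmem : ∀ x, x ∈ U ↔ G.connectedComponentMk x = G.connectedComponentMk v := by
    intro x
    exact SimpleGraph.ConnectedComponent.mem_supp_iff _ _
  have hU_cl : ∀ u ∈ U, ∀ z, G.Adj u z → z ∈ U := by
    intro u hu z hadj
    rw [hUmem] at hu ⊢
    rw [← hu]
    exact (SimpleGraph.ConnectedComponent.connectedComponentMk_eq_of_adj hadj).symm
  have hvU : v ∈ U := by rw [hUmem]
  -- a simplicial vertex in U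
  have transfer : ∀ (w : V) (hw : w ∈ U), Simplicial (G.induce U) ⟨w, hw⟩ → Simplicial G w := by
    intro w hw hsimp x y hx hy hxy
    have hxU : x ∈ U := hU_cl w hw x hx
    have hyU : y ∈ U := hU_cl w hw y hy
    have : (G.induce U).Adj ⟨x, hxU⟩ ⟨y, hyU⟩ :=
      hsimp (by exact hx) (by exact hy) (fun h => hxy (congrArg Subtype.val h))
    exact this
  obtain ⟨w, hwU, hwsimp⟩ : ∃ w, w ∈ U ∧ Simplicial G w := by
    rcases dirac (Fintype.card U) (G.induce U) le_rfl (isChordal_induce hch U) with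
      hcompl | ⟨α, β, hnadj', hne', hsα, hsβ⟩
    · refine ⟨v, hvU, transfer v hvU ?_⟩
      intro x y hx hy hxy
      exact hcompl x y hxy
    · exact ⟨α, α.2, transfer α α.2 (by convert hsα)⟩
  set K : Finset V := insert w (G.neighborFinset w) with hKdef
  have hwK : w ∈ K := Finset.mem_insert_self _ _
  have hK_cl : ∀ u ∈ K, ∀ z, G.Adj u z → z ∈ K := by
    intro u hu z hadj
    rcases Finset.mem_insert.mp hu with rfl | hu
    · exact Finset.mem_insert_of_mem ((G.mem_neighborFinset _ _).mpr hadj)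
    · have hadj_wu : G.Adj w u := (G.mem_neighborFinset _ _).mp hu
      have := closed_nbhd hk hdeg hwsimp hadj_wu
      rw [← hKdef] at this
      rw [← this]
      exact Finset.mem_insert_of_mem ((G.mem_neighborFinset _ _).mpr hadj)
  have hKU : (K : Set V) = U := by
    apply Set.eq_of_subset_of_subset
    · intro x hx
      rcases Finset.mem_insert.mp hx with rfl | hx
      · exact hwU
      · exact hU_cl w hwU x ((G.mem_neighborFinset _ _).mp hx)
    · intro u hu
      rw [hUmem] at hu hwU
      have hreach : G.Reachable w u := by
        rw [← SimpleGraph.ConnectedComponent.eq]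
        rw [hwU, hu]
      obtain ⟨p⟩ := hreach
      refine walk_closure (T := (∅ : Set V)) ?_ p hwK ?_
      · intro a ha b hadj _
        exact hK_cl a ha b hadj
      · intro x _
        exact Set.notMem_empty x
  have hKcard : K.card = k + 1 := by
    rw [hKdef, Finset.card_insert_of_notMem (fun h => G.irrefl ((G.mem_neighborFinset _ _).mp h))]
    have := hdeg w
    rw [SimpleGraph.degree] at this
    omega
  constructor
  · show U.ncard = k + 1
    rw [← hKU, Set.ncard_coe_finset, hKcard]
  · intro x hx0 y hy0 hxy
    have hx : x ∈ U := hx0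
    have hy : y ∈ U := hy0
    rw [← hKU] at hx hy
    rcases Finset.mem_insert.mp hx with rfl | hx
    · rcases Finset.mem_insert.mp hy with rfl | hy
      · exact absurd rfl hxy
      · exact (G.mem_neighborFinset _ _).mp hy
    · rcases Finset.mem_insert.mp hy with rfl | hy
      · exact ((G.mem_neighborFinset _ _).mp hx).symm
      · exact hwsimp ((G.mem_neighborFinset _ _).mp hx)
          ((G.mem_neighborFinset _ _).mp hy) hxy


end Aux

/-- For `q ≥ 2` and `k ≥ 2`, every chordal graph of order `q * (k+1)`, minimum degree `k`,
and size `q * C(k+1, 2)` is isomorphic to `q K_{k+1}`; in particular every connected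
component is a complete graph on `k + 1` vertices and the graph is disconnected. -/
theorem stmt_11 (q k : ℕ) (hq : 2 ≤ q) (hk : 2 ≤ k)
    {V : Type*} [Fintype V] (G : SimpleGraph V)
    (hcard : Fintype.card V = q * (k + 1))
    (hchordal : G.IsChordal) (hmin : G.minDegree = k)
    (hsize : G.edgeFinset.card = q * Nat.choose (k + 1) 2) :
    Nonempty (G ≃g copiesOfComplete q (k + 1)) ∧
    (∀ c : G.ConnectedComponent, c.supp.ncard = k + 1 ∧
      ∀ x ∈ c.supp, ∀ y ∈ c.supp, x ≠ y → G.Adj x y) ∧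
    ¬ G.Connected := by
  classical
  have hVne : Nonempty V := by
    rw [← Fintype.card_pos_iff, hcard]
    positivity
  -- all degrees are k
  have hdeg : ∀ v, G.degree v = k := by
    have hsum : ∑ v, G.degree v = 2 * G.edgeFinset.card :=
      SimpleGraph.sum_degrees_eq_twice_card_edges G
    have hchoose : 2 * Nat.choose (k + 1) 2 = (k + 1) * k := by
      rw [Nat.choose_two_right]
      have h2 : 2 ∣ (k + 1) * (k + 1 - 1) := by
        rw [Nat.add_sub_cancel, mul_comm]
        exact (Nat.even_mul_succ_self k).two_dvd
      rw [Nat.mul_div_cancel' h2, Nat.add_sub_cancel]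
    have hsum' : ∑ v, G.degree v = Fintype.card V * k := by
      rw [hsum, hsize, hcard]
      calc 2 * (q * Nat.choose (k + 1) 2) = q * (2 * Nat.choose (k + 1) 2) := by ring
        _ = q * ((k + 1) * k) := by rw [hchoose]
        _ = q * (k + 1) * k := by ring
    have hge : ∀ v, k ≤ G.degree v := by
      intro v
      rw [← hmin]
      exact G.minDegree_le_degree v
    by_contra hcon
    push_neg at hcon
    obtain ⟨v0, hv0⟩ := hcon
    have hlt : ∑ _v : V, k < ∑ v, G.degree v := by
      refine Finset.sum_lt_sum (fun i _ => hge i) ⟨v0, Finset.mem_univ _, ?_⟩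
      exact lt_of_le_of_ne (hge v0) (Ne.symm hv0)
    rw [Finset.sum_const, Finset.card_univ, smul_eq_mul] at hlt
    omega
  have hcomp := Aux.comp_structure hchordal (by omega : 1 ≤ k) hdeg
  -- component counting
  have hsuppcard : ∀ c : G.ConnectedComponent, Fintype.card c.supp = k + 1 := by
    intro c
    have := (hcomp c).1
    rwa [← Nat.card_coe_set_eq, Nat.card_eq_fintype_card] at this
  have hcards : Fintype.card V = Fintype.card G.ConnectedComponent * (k + 1) := by
    have he : (Σ c : G.ConnectedComponent, c.supp) ≃ V :=
      Equiv.sigmaFiberEquiv G.connectedComponentMk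
    rw [← Fintype.card_congr he, Fintype.card_sigma]
    simp [hsuppcard]
  have hqcomp : Fintype.card G.ConnectedComponent = q := by
    have : Fintype.card G.ConnectedComponent * (k + 1) = q * (k + 1) := by
      rw [← hcards, hcard]
    exact Nat.eq_of_mul_eq_mul_right (by omega) this
  -- adjacency characterization
  have hadj_iff : ∀ x y : V, G.Adj x y ↔
      (G.connectedComponentMk x = G.connectedComponentMk y ∧ x ≠ y) := by
    intro x y
    constructor
    · intro h
      exact ⟨SimpleGraph.ConnectedComponent.connectedComponentMk_eq_of_adj h, h.ne⟩
    · rintro ⟨hc, hne⟩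
      refine (hcomp (G.connectedComponentMk y)).2 x ?_ y ?_ hne
      · exact hc
      · rfl
  -- the isomorphism
  have eqc : G.ConnectedComponent ≃ Fin q := Fintype.equivFinOfCardEq hqcomp
  have F : ∀ c : G.ConnectedComponent, c.supp ≃ Fin (k + 1) :=
    fun c => Fintype.equivFinOfCardEq (hsuppcard c)
  let e : V ≃ Fin q × Fin (k + 1) :=
    (Equiv.sigmaFiberEquiv G.connectedComponentMk).symm.trans
      ((Equiv.sigmaCongrRight F).trans
        ((Equiv.sigmaEquivProd G.ConnectedComponent (Fin (k + 1))).trans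
          (Equiv.prodCongr eqc (Equiv.refl _))))
  have he_fst : ∀ v : V, (e v).1 = eqc (G.connectedComponentMk v) := fun v => rfl
  have hiso : Nonempty (G ≃g copiesOfComplete q (k + 1)) := by
    refine ⟨⟨e, ?_⟩⟩
    intro a b
    show ((e a).1 = (e b).1 ∧ e a ≠ e b) ↔ G.Adj a b
    rw [he_fst, he_fst, hadj_iff]
    constructor
    · rintro ⟨h1, h2⟩
      exact ⟨eqc.injective h1, fun h => h2 (by rw [h])⟩
    · rintro ⟨h1, h2⟩
      exact ⟨by rw [h1], fun h => h2 (e.injective h)⟩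
  refine ⟨hiso, hcomp, ?_⟩
  -- not connected
  intro hconn
  obtain ⟨c1, c2, hc12⟩ := Fintype.exists_pair_of_one_lt_card (α := G.ConnectedComponent)
    (by omega)
  obtain ⟨v1, hv1⟩ := c1.exists_rep
  obtain ⟨v2, hv2⟩ := c2.exists_rep
  apply hc12
  rw [← hv1, ← hv2]
  exact SimpleGraph.ConnectedComponent.sound (hconn.preconnected v1 v2)
end

section
/- Let q and k be integers with q ≥ 2 and k ≥ 2. Then every connected chordal graph of order n = q(k+1) and minimum degree k has at least q·binomial(k+1,2) + 1 edges. -/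
open scoped Classical

namespace SimpleGraph

lemma IsChordal.induce {V : Type*} {G : SimpleGraph V} (h : G.IsChordal) (s : Set V) :
    (G.induce s).IsChordal := by
  intro v w hcyc hlen
  let f : G.induce s ↪g G := Embedding.induce s
  have hcyc' : (w.map f.toHom).IsCycle := hcyc.map f.injective
  have hlen' : 3 < (w.map f.toHom).length := by rwa [Walk.length_map]
  obtain ⟨a, b, hab, ha, hb, hnot⟩ := h (w.map f.toHom) hcyc' hlen'
  rw [Walk.support_map, List.mem_map] at ha hb
  obtain ⟨a', ha', rfl⟩ := ha
  obtain ⟨b', hb', rfl⟩ := hb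
  refine ⟨a', b', hab, ha', hb', fun hmem => hnot ?_⟩
  rw [Walk.edges_map]
  exact List.mem_map_of_mem hmem

end SimpleGraph

namespace SimpleGraph

variable {V : Type*} {G : SimpleGraph V}

/-- `u` and `v` are joined by a walk avoiding the set `S`. -/
def AReach (G : SimpleGraph V) (S : Finset V) (u v : V) : Prop :=
  ∃ p : G.Walk u v, ∀ z ∈ p.support, z ∉ S

lemma AReach.refl {S : Finset V} {u : V} (h : u ∉ S) : G.AReach S u u :=
  ⟨Walk.nil, by simp [h]⟩

lemma AReach.symm {S : Finset V} {u v : V} (h : G.AReach S u v) : G.AReach S v u := by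
  obtain ⟨p, hp⟩ := h
  exact ⟨p.reverse, fun z hz => hp z (by rwa [Walk.support_reverse, List.mem_reverse] at hz)⟩

lemma AReach.trans {S : Finset V} {u v w : V} (h : G.AReach S u v) (h' : G.AReach S v w) :
    G.AReach S u w := by
  obtain ⟨p, hp⟩ := h
  obtain ⟨q, hq⟩ := h'
  refine ⟨p.append q, fun z hz => ?_⟩
  rw [Walk.mem_support_append_iff] at hz
  exact hz.elim (hp z) (hq z)

lemma AReach.notMem {S : Finset V} {u v : V} (h : G.AReach S u v) : v ∉ S := by
  obtain ⟨p, hp⟩ := h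
  exact hp v p.end_mem_support

lemma AReach.notMem' {S : Finset V} {u v : V} (h : G.AReach S u v) : u ∉ S := by
  obtain ⟨p, hp⟩ := h
  exact hp u p.start_mem_support

lemma AReach.step {S : Finset V} {u v w : V} (h : G.AReach S u v) (hadj : G.Adj v w)
    (hw : w ∉ S) : G.AReach S u w := by
  obtain ⟨p, hp⟩ := h
  refine ⟨p.concat hadj, fun z hz => ?_⟩
  rw [Walk.support_concat, List.mem_append] at hz
  rcases hz with hz | hz
  · exact hp z hz
  · simp only [List.mem_singleton] at hz; subst hz; exact hw

lemma AReach.of_walk_mem {S : Finset V} {u v z : V} (p : G.Walk u v)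
    (hp : ∀ z ∈ p.support, z ∉ S) (hz : z ∈ p.support) : G.AReach S u z :=
  ⟨p.takeUntil z hz, fun y hy => hp y (p.support_takeUntil_subset hz hy)⟩

lemma Walk.edge_mem_of_length_eq_one {u v : V} (p : G.Walk u v) (h : p.length = 1) :
    s(u, v) ∈ p.edges := by
  cases p with
  | nil => simp at h
  | cons h' q =>
    rw [Walk.length_cons, Nat.add_eq_right] at h
    have := Walk.eq_of_length_eq_zero h
    subst this
    simp

end SimpleGraph

namespace SimpleGraph
variable {V : Type*} {G : SimpleGraph V}

lemma exists_shortcut {x y c d : V} (P : G.Walk x y) (hcd : G.Adj c d)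
    (hc : c ∈ P.support) (hd : d ∈ P.support) (hne : s(c, d) ∉ P.edges) :
    ∃ W : G.Walk x y, W.length < P.length ∧ ∀ z ∈ W.support, z ∈ P.support := by
  classical
  obtain ⟨q, r, rfl⟩ := Walk.mem_support_iff_exists_append.mp hc
  rw [Walk.mem_support_append_iff] at hd
  rcases hd with hd | hd
  · obtain ⟨q1, q2, rfl⟩ := Walk.mem_support_iff_exists_append.mp hd
    have h2 : 2 ≤ q2.length := by
      by_contra h
      push_neg at h
      interval_cases h' : q2.length
      · exact hcd.ne (Walk.eq_of_length_eq_zero h').symm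
      · apply hne
        have : s(d, c) ∈ q2.edges := q2.edge_mem_of_length_eq_one h'
        rw [Sym2.eq_swap] at this
        rw [Walk.edges_append, Walk.edges_append]
        exact List.mem_append_left _ (List.mem_append_right _ this)
    refine ⟨q1.append (Walk.cons hcd.symm r), ?_, fun z hz => ?_⟩
    · simp only [Walk.length_append, Walk.length_cons]
      omega
    · simp only [Walk.mem_support_append_iff, Walk.support_cons, List.mem_cons] at hz ⊢
      rcases hz with hz | (rfl | hz)
      · exact Or.inl (Or.inl hz)
      · exact Or.inl (Or.inr q2.start_mem_support)
      · exact Or.inr hz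
  · obtain ⟨r1, r2, rfl⟩ := Walk.mem_support_iff_exists_append.mp hd
    have h2 : 2 ≤ r1.length := by
      by_contra h
      push_neg at h
      interval_cases h' : r1.length
      · exact hcd.ne (Walk.eq_of_length_eq_zero h')
      · apply hne
        have : s(c, d) ∈ r1.edges := r1.edge_mem_of_length_eq_one h'
        rw [Walk.edges_append, Walk.edges_append]
        exact List.mem_append_right _ (List.mem_append_left _ this)
    refine ⟨q.append (Walk.cons hcd r2), ?_, fun z hz => ?_⟩
    · simp only [Walk.length_append, Walk.length_cons]
      omega
    · simp only [Walk.mem_support_append_iff, Walk.support_cons, List.mem_cons] at hz ⊢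
      rcases hz with hz | (rfl | hz)
      · exact Or.inl hz
      · exact Or.inl q.end_mem_support
      · exact Or.inr (Or.inr hz)

end SimpleGraph

namespace SimpleGraph
variable {V : Type*} {G : SimpleGraph V}

lemma cycle_of_two_paths {x y : V} (P1 P2 : G.Walk x y) (h1 : P1.IsPath) (h2 : P2.IsPath)
    (hne : x ≠ y) (hnadj : ¬G.Adj x y)
    (hdisj : ∀ z, z ∈ P1.support → z ∈ P2.support → z = x ∨ z = y) :
    (P1.append P2.reverse).IsCycle := by
  have key : ∀ c d : V, G.Adj c d → c ∈ P1.support → c ∈ P2.support →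
      d ∈ P1.support → d ∈ P2.support → False := by
    intro c d hcd hc1 hc2 hd1 hd2
    rcases hdisj c hc1 hc2 with rfl | rfl <;> rcases hdisj d hd1 hd2 with rfl | rfl
    · exact hcd.ne rfl
    · exact hnadj hcd
    · exact hnadj hcd.symm
    · exact hcd.ne rfl
  refine ⟨⟨⟨?_⟩, ?_⟩, ?_⟩
  · rw [Walk.edges_append, Walk.edges_reverse]
    refine List.Nodup.append h1.isTrail.edges_nodup
      (List.nodup_reverse.mpr h2.isTrail.edges_nodup) ?_
    intro e he1 he2
    rw [List.mem_reverse] at he2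
    revert he1 he2
    induction e using Sym2.ind with
    | _ c d =>
      intro he1 he2
      exact key c d (P1.adj_of_mem_edges he1) (P1.fst_mem_support_of_mem_edges he1)
        (P2.fst_mem_support_of_mem_edges he2) (P1.snd_mem_support_of_mem_edges he1)
        (P2.snd_mem_support_of_mem_edges he2)
  · intro h
    have hl := congrArg Walk.length h
    rw [Walk.length_append] at hl
    simp only [Walk.length_nil, Nat.add_eq_zero] at hl
    exact hne (Walk.eq_of_length_eq_zero hl.1)
  · have h2r : P2.reverse.IsPath := h2.reverse
    have c1 := h1.support_nodup
    rw [P1.support_eq_cons] at c1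
    obtain ⟨hx1, hn1⟩ := List.nodup_cons.mp c1
    have c2 := h2r.support_nodup
    rw [P2.reverse.support_eq_cons] at c2
    obtain ⟨hy2, hn2⟩ := List.nodup_cons.mp c2
    rw [Walk.support_append, P1.support_eq_cons, List.cons_append, List.tail_cons]
    refine List.Nodup.append hn1 hn2 ?_
    intro z hz1 hz2
    have hz1' : z ∈ P1.support := by
      rw [P1.support_eq_cons]; exact List.mem_cons_of_mem _ hz1
    have hzx : z ≠ x := fun h => hx1 (h ▸ hz1)
    have hz2r : z ∈ P2.reverse.support := by
      rw [P2.reverse.support_eq_cons]; exact List.mem_cons_of_mem _ hz2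
    have hz2' : z ∈ P2.support := by
      rwa [Walk.support_reverse, List.mem_reverse] at hz2r
    have hzy : z ≠ y := fun h => hy2 (h ▸ hz2)
    rcases hdisj z hz1' hz2' with rfl | rfl
    exacts [hzx rfl, hzy rfl]

end SimpleGraph

namespace SimpleGraph
variable {V : Type*} {G : SimpleGraph V}

lemma exists_min_path (S : Finset V) (a x y ax ay : V) (hxy : x ≠ y) (hnxy : ¬G.Adj x y)
    (h1 : G.Adj x ax) (h2 : G.Adj y ay) (hax : G.AReach S a ax) (hay : G.AReach S a ay) :
    ∃ P : G.Walk x y, P.IsPath ∧ (∀ z ∈ P.support, z = x ∨ z = y ∨ G.AReach S a z) ∧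
      2 ≤ P.length ∧
      ∀ W : G.Walk x y, (∀ z ∈ W.support, z = x ∨ z = y ∨ G.AReach S a z) →
        P.length ≤ W.length := by
  classical
  obtain ⟨p1, hp1⟩ := hax
  obtain ⟨p2, hp2⟩ := hay
  set r : G.Walk ax ay := p1.reverse.append p2 with hr
  have hrA : ∀ z ∈ r.support, G.AReach S a z := by
    intro z hz
    rw [hr, Walk.mem_support_append_iff] at hz
    rcases hz with hz | hz
    · rw [Walk.support_reverse, List.mem_reverse] at hz
      exact AReach.of_walk_mem p1 hp1 hz
    · exact AReach.of_walk_mem p2 hp2 hz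
  set P0 : G.Walk x y := Walk.cons h1 (r.concat h2.symm) with hP0
  have hP0A : ∀ z ∈ P0.support, z = x ∨ z = y ∨ G.AReach S a z := by
    intro z hz
    rw [hP0, Walk.support_cons, List.mem_cons] at hz
    rcases hz with rfl | hz
    · exact Or.inl rfl
    · rw [Walk.support_concat, List.mem_append] at hz
      rcases hz with hz | hz
      · exact Or.inr (Or.inr (hrA z hz))
      · simp only [List.mem_singleton] at hz
        exact Or.inr (Or.inl hz)
  have hex : ∃ n, ∃ P : G.Walk x y,
      (∀ z ∈ P.support, z = x ∨ z = y ∨ G.AReach S a z) ∧ P.length = n :=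
    ⟨P0.length, P0, hP0A, rfl⟩
  obtain ⟨P1', hP1'A, hP1'len⟩ := Nat.find_spec hex
  have hmin : ∀ W : G.Walk x y,
      (∀ z ∈ W.support, z = x ∨ z = y ∨ G.AReach S a z) → Nat.find hex ≤ W.length :=
    fun W hW => Nat.find_min' hex ⟨W, hW, rfl⟩
  have hPA : ∀ z ∈ P1'.bypass.support, z = x ∨ z = y ∨ G.AReach S a z :=
    fun z hz => hP1'A z (P1'.support_bypass_subset hz)
  have hlen2 : 2 ≤ P1'.bypass.length := by
    by_contra h
    push_neg at h
    interval_cases h' : P1'.bypass.length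
    · exact hxy (Walk.eq_of_length_eq_zero h')
    · exact hnxy (Walk.adj_of_length_eq_one h')
  refine ⟨P1'.bypass, P1'.bypass_isPath, hPA, hlen2, fun W hW => ?_⟩
  calc P1'.bypass.length ≤ P1'.length := P1'.length_bypass_le
    _ = Nat.find hex := hP1'len
    _ ≤ W.length := hmin W hW

lemma sep_neighbor {S : Finset V} {a c s : V} (w : G.Walk a c)
    (hw : ∀ z ∈ w.support, z ∉ S.erase s) (hs : s ∈ w.support) (has : a ≠ s) :
    ∃ u, G.Adj s u ∧ G.AReach S a u := by
  classical
  set t := w.takeUntil s hs with ht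
  have htsub : ∀ z ∈ t.support, z ∉ S.erase s :=
    fun z hz => hw z (w.support_takeUntil_subset hs hz)
  have hcount : t.support.count s = 1 := w.count_support_takeUntil_eq_one hs
  have hnil : ¬ t.reverse.Nil := by
    rw [Walk.nil_iff_length_eq, Walk.length_reverse]
    intro h
    exact has (Walk.eq_of_length_eq_zero h)
  obtain ⟨u, hadj, q, hq⟩ := Walk.not_nil_iff.mp hnil
  have hsupp : t.reverse.support = s :: q.support := by rw [hq, Walk.support_cons]
  have hqs : s ∉ q.support := by
    have hc2 : t.support.count s = (s :: q.support).count s := by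
      rw [← hsupp, Walk.support_reverse, List.count_reverse]
    rw [hcount, List.count_cons_self] at hc2
    intro hmem
    have := List.count_pos_iff.mpr hmem
    omega
  refine ⟨u, hadj, ⟨q.reverse, fun z hz => ?_⟩⟩
  rw [Walk.support_reverse, List.mem_reverse] at hz
  have hzt : z ∈ t.support := by
    have : z ∈ t.reverse.support := by
      rw [hsupp]; exact List.mem_cons_of_mem _ hz
    rwa [Walk.support_reverse, List.mem_reverse] at this
  intro hzS
  exact htsub z hzt (Finset.mem_erase.mpr ⟨fun h => hqs (h ▸ hz), hzS⟩)

end SimpleGraph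

namespace SimpleGraph
variable {V : Type*} {G : SimpleGraph V}

lemma minsep_clique [Fintype V] (hch : G.IsChordal) {a b : V}
    (hab : a ≠ b) (hnadj : ¬G.Adj a b) :
    ∃ S : Finset V, a ∉ S ∧ b ∉ S ∧ ¬G.AReach S a b ∧
      (∀ s ∈ S, ∃ u, G.Adj s u ∧ G.AReach S a u) ∧
      (∀ s ∈ S, ∃ u, G.Adj s u ∧ G.AReach S b u) ∧
      (∀ x ∈ S, ∀ y ∈ S, x ≠ y → G.Adj x y) := by
  classical
  set Seps : Finset (Finset V) :=
    Finset.univ.filter (fun S => a ∉ S ∧ b ∉ S ∧ ¬G.AReach S a b) with hSeps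
  have hmem : ∀ S : Finset V, S ∈ Seps ↔ a ∉ S ∧ b ∉ S ∧ ¬G.AReach S a b := by
    intro S; simp [hSeps]
  have hne : Seps.Nonempty := by
    refine ⟨Finset.univ \ {a, b}, (hmem _).mpr ⟨by simp, by simp, ?_⟩⟩
    rintro ⟨p, hp⟩
    have hpnil : ¬ p.Nil := by
      rw [Walk.nil_iff_length_eq]
      intro h
      exact hab (Walk.eq_of_length_eq_zero h)
    obtain ⟨u, hadj, q, rfl⟩ := Walk.not_nil_iff.mp hpnil
    have hu : u ∈ (Walk.cons hadj q).support := by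
      rw [Walk.support_cons]
      exact List.mem_cons_of_mem _ q.start_mem_support
    have := hp u hu
    simp only [Finset.mem_sdiff, Finset.mem_univ, true_and, not_not,
      Finset.mem_insert, Finset.mem_singleton] at this
    rcases this with rfl | rfl
    · exact hadj.ne rfl
    · exact hnadj hadj
  obtain ⟨S, hSmem, hSmin⟩ := Seps.exists_min_image Finset.card hne
  obtain ⟨haS, hbS, hsep⟩ := (hmem S).mp hSmem
  have hnbr : ∀ s ∈ S, (∃ u, G.Adj s u ∧ G.AReach S a u) ∧
      (∃ u, G.Adj s u ∧ G.AReach S b u) := by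
    intro s hsS
    have hcard : (S.erase s).card < S.card := Finset.card_erase_lt_of_mem hsS
    have hTnot : S.erase s ∉ Seps := fun h => absurd (hSmin _ h) (by omega)
    have hreach : G.AReach (S.erase s) a b := by
      by_contra hr
      exact hTnot ((hmem _).mpr ⟨fun h => haS (Finset.mem_of_mem_erase h),
        fun h => hbS (Finset.mem_of_mem_erase h), hr⟩)
    obtain ⟨w, hw⟩ := hreach
    have hsw : s ∈ w.support := by
      by_contra hsw
      refine hsep ⟨w, fun z hz hzS => ?_⟩
      have : z ≠ s := fun h => hsw (h ▸ hz)
      exact hw z hz (Finset.mem_erase.mpr ⟨this, hzS⟩)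
    constructor
    · exact sep_neighbor w hw hsw (fun h => haS (h ▸ hsS))
    · have hw' : ∀ z ∈ w.reverse.support, z ∉ S.erase s := by
        intro z hz
        rw [Walk.support_reverse, List.mem_reverse] at hz
        exact hw z hz
      have hsw' : s ∈ w.reverse.support := by
        rw [Walk.support_reverse, List.mem_reverse]; exact hsw
      exact sep_neighbor w.reverse hw' hsw' (fun h => hbS (h ▸ hsS))
  refine ⟨S, haS, hbS, hsep, fun s hs => (hnbr s hs).1, fun s hs => (hnbr s hs).2, ?_⟩
  intro x hxS y hyS hxy
  by_contra hnxy
  obtain ⟨⟨ax, hxax, haxA⟩, ⟨bx, hxbx, hbxB⟩⟩ := hnbr x hxS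
  obtain ⟨⟨ay, hyay, hayA⟩, ⟨by', hyby, hbyB⟩⟩ := hnbr y hyS
  obtain ⟨P1, hP1path, hIntA, hlen1, hmin1⟩ :=
    exists_min_path S a x y ax ay hxy hnxy hxax hyay haxA hayA
  obtain ⟨P2, hP2path, hIntB, hlen2, hmin2⟩ :=
    exists_min_path S b x y bx by' hxy hnxy hxbx hyby hbxB hbyB
  have hAB : ∀ z, G.AReach S a z → G.AReach S b z → False :=
    fun z h h' => hsep (h.trans h'.symm)
  have hdisj : ∀ z, z ∈ P1.support → z ∈ P2.support → z = x ∨ z = y := by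
    intro z h1 h2
    rcases hIntA z h1 with rfl | rfl | hA
    · exact Or.inl rfl
    · exact Or.inr rfl
    rcases hIntB z h2 with rfl | rfl | hB
    · exact Or.inl rfl
    · exact Or.inr rfl
    · exact absurd (hAB z hA hB) (by simp)
  have hcyc := cycle_of_two_paths P1 P2 hP1path hP2path hxy hnxy hdisj
  have hlen : 3 < (P1.append P2.reverse).length := by
    rw [Walk.length_append, Walk.length_reverse]
    omega
  obtain ⟨c, d, hcd, hcC, hdC, hnedge⟩ := hch _ hcyc hlen
  rw [Walk.mem_support_append_iff] at hcC hdC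
  have he1 : s(c, d) ∉ P1.edges := fun h => hnedge (by
    rw [Walk.edges_append]; exact List.mem_append_left _ h)
  have he2 : s(c, d) ∉ P2.edges := fun h => hnedge (by
    rw [Walk.edges_append, Walk.edges_reverse]
    exact List.mem_append_right _ (List.mem_reverse.mpr h))
  have short1 : ¬(c ∈ P1.support ∧ d ∈ P1.support) := by
    rintro ⟨hc, hd⟩
    obtain ⟨W, hWlen, hWsup⟩ := exists_shortcut P1 hcd hc hd he1
    have := hmin1 W (fun z hz => hIntA z (hWsup z hz))
    omega
  have short2 : ¬(c ∈ P2.support ∧ d ∈ P2.support) := by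
    rintro ⟨hc, hd⟩
    obtain ⟨W, hWlen, hWsup⟩ := exists_shortcut P2 hcd hc hd he2
    have := hmin2 W (fun z hz => hIntB z (hWsup z hz))
    omega
  have hcC' : c ∈ P1.support ∨ c ∈ P2.support := by
    rcases hcC with h | h
    · exact Or.inl h
    · rw [Walk.support_reverse, List.mem_reverse] at h; exact Or.inr h
  have hdC' : d ∈ P1.support ∨ d ∈ P2.support := by
    rcases hdC with h | h
    · exact Or.inl h
    · rw [Walk.support_reverse, List.mem_reverse] at h; exact Or.inr h
  by_cases hc1 : c ∈ P1.support <;> by_cases hd1 : d ∈ P1.support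
  · exact short1 ⟨hc1, hd1⟩
  · have hd2 : d ∈ P2.support := hdC'.resolve_left hd1
    by_cases hc2 : c ∈ P2.support
    · exact short2 ⟨hc2, hd2⟩
    · have hcA : G.AReach S a c := by
        rcases hIntA c hc1 with rfl | rfl | h
        · exact absurd P2.start_mem_support hc2
        · exact absurd P2.end_mem_support hc2
        · exact h
      have hdB : G.AReach S b d := by
        rcases hIntB d hd2 with rfl | rfl | h
        · exact absurd P1.start_mem_support hd1
        · exact absurd P1.end_mem_support hd1
        · exact h
      exact hAB d (hcA.step hcd hdB.notMem) hdB
  · have hc2 : c ∈ P2.support := hcC'.resolve_left hc1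
    by_cases hd2 : d ∈ P2.support
    · exact short2 ⟨hc2, hd2⟩
    · have hdA : G.AReach S a d := by
        rcases hIntA d hd1 with rfl | rfl | h
        · exact absurd P2.start_mem_support hd2
        · exact absurd P2.end_mem_support hd2
        · exact h
      have hcB : G.AReach S b c := by
        rcases hIntB c hc2 with rfl | rfl | h
        · exact absurd P1.start_mem_support hc1
        · exact absurd P1.end_mem_support hc1
        · exact h
      exact hAB c (hdA.step hcd.symm hcB.notMem) hcB
  · have hc2 : c ∈ P2.support := hcC'.resolve_left hc1
    have hd2 : d ∈ P2.support := hdC'.resolve_left hd1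
    exact short2 ⟨hc2, hd2⟩

end SimpleGraph

namespace SimpleGraph

universe u

variable {V : Type u} {G : SimpleGraph V}

/-- A simplicial vertex: its neighborhood is a clique. -/
def IsSimp (G : SimpleGraph V) (v : V) : Prop :=
  ∀ ⦃c d : V⦄, G.Adj v c → G.Adj v d → c ≠ d → G.Adj c d

lemma side {n : ℕ}
    (IH : ∀ (W : Type u) [Fintype W] (H : SimpleGraph W), Fintype.card W ≤ n →
      H.IsChordal → (∀ c d : W, c ≠ d → H.Adj c d) ∨
      ∃ c d : W, c ≠ d ∧ ¬H.Adj c d ∧ IsSimp H c ∧ IsSimp H d)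
    [Fintype V] (hV : Fintype.card V ≤ n + 1)
    (hch : G.IsChordal) (a b : V) (S : Finset V)
    (haS : a ∉ S) (hbS : b ∉ S) (hsep : ¬G.AReach S a b)
    (hclique : ∀ x ∈ S, ∀ y ∈ S, x ≠ y → G.Adj x y) :
    ∃ z, G.AReach S a z ∧ IsSimp G z := by
  classical
  set sA : Set V := {z | G.AReach S a z} ∪ ↑S with hsA
  have hbA : b ∉ sA := by
    intro h
    rcases h with h | h
    · exact hsep h
    · exact hbS h
  have hblt : Fintype.card ↥sA < Fintype.card V := by
    refine Fintype.card_lt_of_injective_of_notMem (Subtype.val : ↥sA → V)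
      Subtype.coe_injective (b := b) ?_
    rw [Subtype.range_coe_subtype]
    exact hbA
  have hcard : Fintype.card ↥sA ≤ n := by omega
  have haA : a ∈ sA := Set.mem_union_left _ (AReach.refl haS)
  have hnbrs : ∀ z : V, G.AReach S a z → ∀ u, G.Adj z u → u ∈ sA := by
    intro z hz u hadj
    by_cases huS : u ∈ S
    · exact Set.mem_union_right _ huS
    · exact Set.mem_union_left _ (hz.step hadj huS)
  have lift : ∀ (z : ↥sA), G.AReach S a z.val →
      IsSimp (G.induce sA) z → IsSimp G z.val := by
    intro z hz hsimp c d hc hd hne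
    have hcA : c ∈ sA := hnbrs z.val hz c hc
    have hdA : d ∈ sA := hnbrs z.val hz d hd
    have hadj : (G.induce sA).Adj ⟨c, hcA⟩ ⟨d, hdA⟩ := by
      apply hsimp
      · exact hc
      · exact hd
      · intro h
        exact hne (congrArg Subtype.val h)
    exact hadj
  rcases IH ↥sA (G.induce sA) hcard (hch.induce sA) with hcomp |
    ⟨c, d, hcd_ne, hcd_nadj, hc_simp, hd_simp⟩
  · refine ⟨a, AReach.refl haS, lift ⟨a, haA⟩ (AReach.refl haS) ?_⟩
    intro c d _ _ hne
    exact hcomp c d hne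
  · have hnotboth : ¬(c.val ∈ S ∧ d.val ∈ S) := by
      rintro ⟨h1, h2⟩
      exact hcd_nadj (hclique _ h1 _ h2 (fun h => hcd_ne (Subtype.ext h)))
    by_cases hcS : c.val ∈ S
    · have hdS : d.val ∉ S := fun h => hnotboth ⟨hcS, h⟩
      have hdA : G.AReach S a d.val := by
        rcases d.2 with h | h
        · exact h
        · exact absurd h hdS
      exact ⟨d.val, hdA, lift d hdA hd_simp⟩
    · have hcA : G.AReach S a c.val := by
        rcases c.2 with h | h
        · exact h
        · exact absurd h hcS
      exact ⟨c.val, hcA, lift c hcA hc_simp⟩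

lemma dirac_aux : ∀ (n : ℕ) (V : Type u) [Fintype V] (G : SimpleGraph V),
    Fintype.card V ≤ n → G.IsChordal →
    (∀ c d : V, c ≠ d → G.Adj c d) ∨
    ∃ c d : V, c ≠ d ∧ ¬G.Adj c d ∧ IsSimp G c ∧ IsSimp G d := by
  intro n
  induction n with
  | zero =>
    intro V _ G hcard _
    left
    intro c d h
    have : 0 < Fintype.card V := Fintype.card_pos_iff.mpr ⟨c⟩
    omega
  | succ n IH =>
    intro V _ G hcard hch
    by_cases hcomp : ∀ c d : V, c ≠ d → G.Adj c d
    · exact Or.inl hcomp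
    right
    push_neg at hcomp
    obtain ⟨a, b, hab, hnadj⟩ := hcomp
    obtain ⟨S, haS, hbS, hsep, hnA, hnB, hclique⟩ := minsep_clique hch hab hnadj
    obtain ⟨x, hxA, hxsimp⟩ := side IH hcard hch a b S haS hbS hsep hclique
    have hsep' : ¬G.AReach S b a := fun h => hsep h.symm
    obtain ⟨y, hyB, hysimp⟩ := side IH hcard hch b a S hbS haS hsep' hclique
    refine ⟨x, y, ?_, ?_, hxsimp, hysimp⟩
    · rintro rfl
      exact hsep (hxA.trans hyB.symm)
    · intro hadj
      have : G.AReach S a y := hxA.step hadj hyB.notMem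
      exact hsep (this.trans hyB.symm)

/-- Every nonempty chordal graph has a simplicial vertex. -/
lemma IsChordal.exists_simplicial [Fintype V] [Nonempty V] (hch : G.IsChordal) :
    ∃ v : V, IsSimp G v := by
  rcases dirac_aux (Fintype.card V) V G le_rfl hch with hcomp | ⟨c, d, _, _, hc, _⟩
  · obtain ⟨v⟩ := ‹Nonempty V›
    refine ⟨v, fun c d hc hd hne => hcomp c d hne⟩
  · exact ⟨c, hc⟩

end SimpleGraph


/-- For integers `q ≥ 2` and `k ≥ 2`, every connected chordal graph of order `q * (k+1)`
and minimum degree `k` has at least `q * C(k+1, 2) + 1` edges. -/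
theorem stmt_14 (q k : ℕ) (hq : 2 ≤ q) (hk : 2 ≤ k)
    {V : Type*} [Fintype V] (G : SimpleGraph V)
    (hcard : Fintype.card V = q * (k + 1))
    (hconn : G.Connected) (hchordal : G.IsChordal) (hmin : G.minDegree = k) :
    q * Nat.choose (k + 1) 2 + 1 ≤ G.edgeFinset.card := by
  classical
  by_contra hlt
  push_neg at hlt
  have hE : G.edgeFinset.card ≤ q * Nat.choose (k + 1) 2 := by omega
  have hdvd : (2 : ℕ) ∣ (k + 1) * k := by
    rw [Nat.mul_comm]
    exact (Nat.even_mul_succ_self k).two_dvd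
  have hch2 : Nat.choose (k + 1) 2 * 2 = (k + 1) * k := by
    rw [Nat.choose_two_right]
    simpa using Nat.div_mul_cancel hdvd
  have hdeg : ∀ v : V, k ≤ G.degree v := fun v => hmin ▸ G.minDegree_le_degree v
  have hsum : ∑ v, G.degree v = 2 * G.edgeFinset.card := G.sum_degrees_eq_twice_card_edges
  have hmul : 2 * (k + 1) ≤ q * (k + 1) := Nat.mul_le_mul_right _ hq
  have hn0 : 0 < Fintype.card V := by omega
  haveI : Nonempty V := Fintype.card_pos_iff.mp hn0
  have h2E : 2 * G.edgeFinset.card ≤ Fintype.card V * k := by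
    calc 2 * G.edgeFinset.card ≤ 2 * (q * Nat.choose (k + 1) 2) := by omega
      _ = q * (Nat.choose (k + 1) 2 * 2) := by ring
      _ = q * ((k + 1) * k) := by rw [hch2]
      _ = Fintype.card V * k := by rw [hcard]; ring
  have hconst : ∑ _v : V, k = Fintype.card V * k := by
    rw [Finset.sum_const, Finset.card_univ, smul_eq_mul]
  have hreg : ∀ v : V, G.degree v = k := by
    by_contra h
    push_neg at h
    obtain ⟨v, hv⟩ := h
    have hv' : k < G.degree v := lt_of_le_of_ne (hdeg v) (Ne.symm hv)
    have hlt2 : ∑ _v : V, k < ∑ v, G.degree v :=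
      Finset.sum_lt_sum (fun i _ => hdeg i) ⟨v, Finset.mem_univ v, hv'⟩
    omega
  obtain ⟨v, hv⟩ := hchordal.exists_simplicial (V := V)
  set Cl : Finset V := insert v (G.neighborFinset v) with hCl
  have hvCl : v ∈ Cl := Finset.mem_insert_self _ _
  have hvnn : v ∉ G.neighborFinset v := by simp
  have hcardCl : Cl.card = k + 1 := by
    rw [hCl, Finset.card_insert_of_notMem hvnn]
    have : (G.neighborFinset v).card = G.degree v := rfl
    rw [this, hreg v]
  have hclosure : ∀ u ∈ Cl, ∀ w, G.Adj u w → w ∈ Cl := by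
    intro u hu w hadj
    rcases Finset.mem_insert.mp hu with rfl | hu
    · exact Finset.mem_insert_of_mem ((G.mem_neighborFinset _ _).mpr hadj)
    · have huv : G.Adj v u := (G.mem_neighborFinset _ _).mp hu
      have huCl : u ∈ Cl := Finset.mem_insert_of_mem hu
      have hsub : Cl.erase u ⊆ G.neighborFinset u := by
        intro w' hw'
        obtain ⟨hne, hw'Cl⟩ := Finset.mem_erase.mp hw'
        rcases Finset.mem_insert.mp hw'Cl with rfl | hw'N
        · exact (G.mem_neighborFinset _ _).mpr huv.symm
        · exact (G.mem_neighborFinset _ _).mpr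
            (hv huv ((G.mem_neighborFinset _ _).mp hw'N) (Ne.symm hne))
      have hle : (G.neighborFinset u).card ≤ (Cl.erase u).card := by
        have h1 : (G.neighborFinset u).card = G.degree u := rfl
        rw [h1, hreg u, Finset.card_erase_of_mem huCl, hcardCl]
        omega
      have heq : Cl.erase u = G.neighborFinset u :=
        Finset.eq_of_subset_of_card_le hsub hle
      have : w ∈ Cl.erase u := by rw [heq]; exact (G.mem_neighborFinset _ _).mpr hadj
      exact Finset.mem_of_mem_erase this
  have hwalk : ∀ (u c : V) (w : G.Walk u c), u ∈ Cl → c ∈ Cl := by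
    intro u c w
    induction w with
    | nil => exact id
    | cons h p ih => exact fun hu => ih (hclosure _ hu _ h)
  obtain ⟨z, hz⟩ : ∃ z, z ∉ Cl := by
    by_contra h
    push_neg at h
    have := congrArg Finset.card (Finset.eq_univ_iff_forall.mpr h)
    rw [hcardCl, Finset.card_univ] at this
    omega
  obtain ⟨w⟩ := hconn.preconnected v z
  exact hz (hwalk v z w hvCl)
end

section
/- Let q and k be integers with q ≥ 2 and k ≥ 2. Then there exists a connected chordal graph of order n = q(k+1) and minimum degree k whose number of edges equals q·binomial(k+1,2) + 1. -/
open scoped Classical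

open Finset SimpleGraph

lemma path_getVert_inj {V : Type*} {G : SimpleGraph V} : ∀ {u v : V} (p : G.Walk u v),
    p.IsPath → ∀ i j, i ≤ p.length → j ≤ p.length → p.getVert i = p.getVert j → i = j := by
  intro u v p
  induction p with
  | nil => intro _ i j hi hj _; simp at hi hj; omega
  | cons h p ih =>
    intro hp i j hi hj hij
    rw [SimpleGraph.Walk.cons_isPath_iff] at hp
    match i, j with
    | 0, 0 => rfl
    | 0, j+1 =>
      exact absurd (SimpleGraph.Walk.mem_support_iff_exists_getVert.mpr
        ⟨j, by simpa using hij.symm, by simpa using hj⟩) hp.2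
    | i+1, 0 =>
      exact absurd (SimpleGraph.Walk.mem_support_iff_exists_getVert.mpr
        ⟨i, by simpa using hij, by simpa using hi⟩) hp.2
    | i+1, j+1 =>
      have := ih hp.1 i j (by simpa using hi) (by simpa using hj) (by simpa using hij)
      omega

lemma chordal_of_peo {V : Type*} {G : SimpleGraph V} (f : V → ℕ)
    (hinj : Function.Injective f)
    (hpeo : ∀ u v w : V, f u < f v → f v < f w → G.Adj u v → G.Adj u w → G.Adj v w) :
    G.IsChordal := by
  intro v w hw hlen
  obtain ⟨m, hm_mem', hm_min⟩ := Finset.exists_min_image w.support.toFinset f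
    ⟨v, by simp⟩
  rw [List.mem_toFinset] at hm_mem'
  have hsup : ∀ x, x ∈ (w.rotate m hm_mem').support → x ∈ w.support := by
    intro x hx
    unfold SimpleGraph.Walk.rotate at hx
    rw [SimpleGraph.Walk.mem_support_append_iff] at hx
    rcases hx with hx | hx
    · exact w.support_dropUntil_subset hm_mem' hx
    · exact w.support_takeUntil_subset hm_mem' hx
  obtain ⟨c, hcyc, hrot, hcsup⟩ :
      ∃ c : G.Walk m m, c.IsCycle ∧ c.edges ~r w.edges ∧ ∀ x, x ∈ c.support → x ∈ w.support :=
    ⟨w.rotate m hm_mem', hw.rotate hm_mem', w.rotate_edges m hm_mem', hsup⟩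
  have hclen : c.length = w.length := by
    have := hrot.perm.length_eq
    rwa [SimpleGraph.Walk.length_edges, SimpleGraph.Walk.length_edges] at this
  cases c with
  | nil => simp at hclen; omega
  | @cons _ a _ h p =>
    obtain ⟨hp, hma⟩ := (SimpleGraph.Walk.cons_isCycle_iff p h).mp hcyc
    have hplen : 3 ≤ p.length := by
      simp only [SimpleGraph.Walk.length_cons] at hclen; omega
    obtain ⟨b, hb⟩ : ∃ b, b = p.getVert (p.length - 1) := ⟨_, rfl⟩
    have hbm : G.Adj b m := by
      have h1 : p.length - 1 < p.length := by omega
      have h2 := p.adj_getVert_succ h1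
      have h3 : p.length - 1 + 1 = p.length := by omega
      rw [h3, SimpleGraph.Walk.getVert_length] at h2
      rwa [hb]
    have hbsupc : b ∈ p.support :=
      SimpleGraph.Walk.mem_support_iff_exists_getVert.mpr ⟨p.length - 1, hb.symm, by omega⟩
    have hbsup : b ∈ w.support := hcsup b (by
      rw [SimpleGraph.Walk.support_cons]; exact List.mem_cons_of_mem _ hbsupc)
    have hasup : a ∈ w.support := hcsup a (by
      rw [SimpleGraph.Walk.support_cons]
      exact List.mem_cons_of_mem _ p.start_mem_support)
    have hma' : f m < f a :=
      lt_of_le_of_ne (hm_min a (List.mem_toFinset.mpr hasup)) (fun hc => h.ne (hinj hc))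
    have hmb' : f m < f b :=
      lt_of_le_of_ne (hm_min b (List.mem_toFinset.mpr hbsup)) (fun hc => hbm.ne (hinj hc.symm))
    have hab : a ≠ b := by
      intro hab
      have := path_getVert_inj p hp 0 (p.length - 1) (by omega) (by omega)
        (by rw [SimpleGraph.Walk.getVert_zero, ← hb]; exact hab)
      omega
    have hadj : G.Adj a b := by
      rcases lt_or_gt_of_ne (fun hc : f a = f b => hab (hinj hc)) with hlt | hgt
      · exact hpeo m a b hma' hlt h hbm.symm
      · exact (hpeo m b a hmb' hgt hbm.symm h).symm
    refine ⟨a, b, hadj, hasup, hbsup, ?_⟩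
    intro hmem
    rw [← hrot.perm.mem_iff, SimpleGraph.Walk.edges_cons] at hmem
    rcases List.mem_cons.mp hmem with heq | hmem2
    · rw [Sym2.eq_iff] at heq
      rcases heq with ⟨h1, h2⟩ | ⟨h1, h2⟩
      · exact h.ne h1.symm
      · exact hbm.ne h2
    · clear hmem
      cases p with
      | nil => simp at hmem2
      | @cons _ cc _ h3 p3 =>
        rw [SimpleGraph.Walk.edges_cons] at hmem2
        rcases List.mem_cons.mp hmem2 with heq | hmem3
        · have hbc : b = cc := by
            rw [Sym2.eq_iff] at heq
            rcases heq with ⟨h1, h2⟩ | ⟨h1, h2⟩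
            · exact h2
            · exact absurd h2.symm hab
          have hgv : (SimpleGraph.Walk.cons h3 p3).getVert 1 = b := by
            simp [SimpleGraph.Walk.getVert_cons_succ, SimpleGraph.Walk.getVert_zero, hbc]
          have := path_getVert_inj _ hp 1 ((SimpleGraph.Walk.cons h3 p3).length - 1)
            (by simp) (by omega) (by rw [hgv, hb])
          simp only [SimpleGraph.Walk.length_cons] at this hplen
          omega
        · have : a ∈ p3.support := SimpleGraph.Walk.fst_mem_support_of_mem_edges p3 hmem3
          rw [SimpleGraph.Walk.cons_isPath_iff] at hp
          exact hp.2 this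


def padj (q k : ℕ) (u v : Fin q × Fin (k+1)) : Prop :=
  (u.1 = v.1 ∧ u.2 ≠ v.2 ∧
      ¬(0 < u.1.val ∧ u.1.val + 2 ≤ q ∧
        ((u.2.val = 0 ∧ v.2.val = k) ∨ (u.2.val = k ∧ v.2.val = 0))))
  ∨ (v.1.val = u.1.val + 1 ∧ u.2.val = k ∧ v.2.val = 0)
  ∨ (u.1.val = v.1.val + 1 ∧ v.2.val = k ∧ u.2.val = 0)

def Gp (q k : ℕ) : SimpleGraph (Fin q × Fin (k+1)) where
  Adj u v := padj q k u v
  symm := by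
    refine ⟨?_⟩
    rintro u v (⟨h1, h2, h3⟩ | h | h)
    · refine Or.inl ⟨h1.symm, h2.symm, fun hr => h3 ?_⟩
      obtain ⟨r1, r2, r3⟩ := hr
      have hv : u.1.val = v.1.val := congrArg Fin.val h1
      refine ⟨by omega, by omega, ?_⟩
      rcases r3 with ⟨x, y⟩ | ⟨x, y⟩
      · exact Or.inr ⟨y, x⟩
      · exact Or.inl ⟨y, x⟩
    · exact Or.inr (Or.inr h)
    · exact Or.inr (Or.inl h)
  loopless := by
    refine ⟨?_⟩
    rintro u (⟨h1, h2, h3⟩ | h | h)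
    · exact h2 rfl
    · omega
    · omega

lemma Gp_adj (q k : ℕ) (u v : Fin q × Fin (k+1)) : (Gp q k).Adj u v ↔ padj q k u v := Iff.rfl

lemma card_prod_aux {q k : ℕ} (i : Fin q) (s : Finset (Fin (k+1))) :
    ({i} ×ˢ s).card = s.card := by simp [Finset.card_product]

lemma card_aux {q k : ℕ} (i : Fin q) (s : Finset (Fin (k+1))) (x : Fin q × Fin (k+1))
    (hx : x.1 ≠ i) : (({i} ×ˢ s) ∪ {x}).card = s.card + 1 := by
  rw [Finset.card_union_of_disjoint, card_prod_aux, Finset.card_singleton]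
  refine Finset.disjoint_singleton_right.mpr (fun hmem => ?_)
  exact hx (by simpa using (Finset.mem_product.mp hmem).1)

lemma card_diff1 {k : ℕ} (a : Fin (k+1)) : ((univ \ {a}) : Finset (Fin (k+1))).card = k := by
  rw [Finset.card_sdiff_of_subset (by simp)]; simp

lemma card_diff2 {k : ℕ} (a c : Fin (k+1)) (h : a ≠ c) :
    ((univ \ {a, c}) : Finset (Fin (k+1))).card = k - 1 := by
  rw [Finset.card_sdiff_of_subset (by simp)]
  rw [Finset.card_insert_of_notMem (by simpa using h), Finset.card_singleton]
  simp

lemma Gp_degree (q k : ℕ) (hq : 2 ≤ q) (hk : 2 ≤ k) (v : Fin q × Fin (k+1)) :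
    (Gp q k).degree v =
      k + (if v = ((⟨0, by omega⟩ : Fin q), Fin.last k) then 1 else 0)
        + (if v = ((⟨q - 1, by omega⟩ : Fin q), (⟨0, by omega⟩ : Fin (k+1))) then 1 else 0) := by
  obtain ⟨i, a⟩ := v
  have hi := i.isLt
  have ha := a.isLt
  rw [show (Gp q k).degree (i, a) = ((Gp q k).neighborFinset (i, a)).card from rfl,
    neighborFinset_eq_filter]
  by_cases h0 : a.val = 0
  · by_cases hI : i.val = 0
    · -- case 1
      have hset : (univ.filter ((Gp q k).Adj (i, a))) = {i} ×ˢ (univ \ {a}) := by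
        ext ⟨i', b⟩
        have hi' := i'.isLt; have hb := b.isLt
        simp only [mem_filter, mem_univ, true_and, Gp_adj, padj, mem_product, mem_singleton,
          mem_sdiff, ne_eq, Fin.ext_iff]
        omega
      rw [hset, card_prod_aux, card_diff1]
      rw [if_neg (by simp [Prod.ext_iff, Fin.ext_iff]; try omega),
        if_neg (by simp only [Prod.ext_iff, Fin.ext_iff]; omega)]
      try omega
    · by_cases hq1 : i.val + 2 ≤ q
      · -- case 2
        have hset : (univ.filter ((Gp q k).Adj (i, a))) =
            ({i} ×ˢ (univ \ {a, ⟨k, by omega⟩})) ∪ {((⟨i.val - 1, by omega⟩ : Fin q), Fin.last k)} := by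
          ext ⟨i', b⟩
          have hi' := i'.isLt; have hb := b.isLt
          simp only [mem_filter, mem_univ, true_and, Gp_adj, padj, mem_product, mem_singleton,
            mem_sdiff, mem_union, mem_insert, ne_eq, Fin.ext_iff, Prod.ext_iff, Fin.val_last]
          omega
        rw [hset, card_aux _ _ _ (by simp [Fin.ext_iff]; try omega),
          card_diff2 _ _ (by simp [Fin.ext_iff]; try omega)]
        rw [if_neg (by simp [Prod.ext_iff, Fin.ext_iff]; try omega),
          if_neg (by simp only [Prod.ext_iff, Fin.ext_iff]; omega)]
        try omega
      · -- case 3 : i.val = q - 1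
        have hset : (univ.filter ((Gp q k).Adj (i, a))) =
            ({i} ×ˢ (univ \ {a})) ∪ {((⟨i.val - 1, by omega⟩ : Fin q), Fin.last k)} := by
          ext ⟨i', b⟩
          have hi' := i'.isLt; have hb := b.isLt
          simp only [mem_filter, mem_univ, true_and, Gp_adj, padj, mem_product, mem_singleton,
            mem_sdiff, mem_union, ne_eq, Fin.ext_iff, Prod.ext_iff, Fin.val_last]
          omega
        rw [hset, card_aux _ _ _ (by simp [Fin.ext_iff]; try omega), card_diff1]
        rw [if_neg (by simp [Prod.ext_iff, Fin.ext_iff]; try omega),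
          if_pos (by simp only [Prod.ext_iff, Fin.ext_iff]; omega)]
        try omega
  · by_cases hK : a.val = k
    · by_cases hI : i.val = 0
      · -- case 4
        have hset : (univ.filter ((Gp q k).Adj (i, a))) =
            ({i} ×ˢ (univ \ {a})) ∪ {((⟨i.val + 1, by omega⟩ : Fin q), (⟨0, by omega⟩ : Fin (k+1)))} := by
          ext ⟨i', b⟩
          have hi' := i'.isLt; have hb := b.isLt
          simp only [mem_filter, mem_univ, true_and, Gp_adj, padj, mem_product, mem_singleton,
            mem_sdiff, mem_union, ne_eq, Fin.ext_iff, Prod.ext_iff]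
          omega
        rw [hset, card_aux _ _ _ (by simp [Fin.ext_iff]; try omega), card_diff1]
        rw [if_pos (by simp [Prod.ext_iff, Fin.ext_iff]; try omega),
          if_neg (by simp only [Prod.ext_iff, Fin.ext_iff]; omega)]
        try omega
      · by_cases hq1 : i.val + 2 ≤ q
        · -- case 5
          have hset : (univ.filter ((Gp q k).Adj (i, a))) =
              ({i} ×ˢ (univ \ {a, ⟨0, by omega⟩})) ∪ {((⟨i.val + 1, by omega⟩ : Fin q), (⟨0, by omega⟩ : Fin (k+1)))} := by
            ext ⟨i', b⟩
            have hi' := i'.isLt; have hb := b.isLt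
            simp only [mem_filter, mem_univ, true_and, Gp_adj, padj, mem_product, mem_singleton,
              mem_sdiff, mem_union, mem_insert, ne_eq, Fin.ext_iff, Prod.ext_iff]
            omega
          rw [hset, card_aux _ _ _ (by simp [Fin.ext_iff]; try omega),
            card_diff2 _ _ (by simp only [ne_eq, Fin.ext_iff]; omega)]
          rw [if_neg (by simp [Prod.ext_iff, Fin.ext_iff]; try omega),
            if_neg (by simp only [Prod.ext_iff, Fin.ext_iff]; omega)]
          try omega
        · -- case 6 : i.val = q - 1
          have hset : (univ.filter ((Gp q k).Adj (i, a))) = {i} ×ˢ (univ \ {a}) := by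
            ext ⟨i', b⟩
            have hi' := i'.isLt; have hb := b.isLt
            simp only [mem_filter, mem_univ, true_and, Gp_adj, padj, mem_product, mem_singleton,
              mem_sdiff, ne_eq, Fin.ext_iff]
            omega
          rw [hset, card_prod_aux, card_diff1]
          rw [if_neg (by simp [Prod.ext_iff, Fin.ext_iff]; try omega),
            if_neg (by simp only [Prod.ext_iff, Fin.ext_iff]; omega)]
          try omega
    · -- case 7 : 0 < a.val < k
      have hset : (univ.filter ((Gp q k).Adj (i, a))) = {i} ×ˢ (univ \ {a}) := by
        ext ⟨i', b⟩
        have hi' := i'.isLt; have hb := b.isLt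
        simp only [mem_filter, mem_univ, true_and, Gp_adj, padj, mem_product, mem_singleton,
          mem_sdiff, ne_eq, Fin.ext_iff]
        omega
      rw [hset, card_prod_aux, card_diff1]
      rw [if_neg (by simp [Prod.ext_iff, Fin.ext_iff]; try omega),
        if_neg (by simp only [Prod.ext_iff, Fin.ext_iff]; omega)]
      try omega


lemma keylt {m : ℕ} {i j a b : ℕ} (ha : a < m) (hb : b < m) :
    i * m + a < j * m + b ↔ i < j ∨ (i = j ∧ a < b) := by
  constructor
  · intro h
    rcases Nat.lt_trichotomy i j with h1 | h1 | h1
    · exact Or.inl h1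
    · subst h1; exact Or.inr ⟨rfl, lt_of_add_lt_add_left h⟩
    · exfalso
      have h2 : (j + 1) * m ≤ i * m := mul_le_mul_left h1 m
      have h3 : j * m + b < (j + 1) * m := by
        rw [Nat.succ_mul]; exact Nat.add_lt_add_left hb _
      exact absurd h (not_lt_of_gt (lt_of_lt_of_le (lt_of_lt_of_le h3 h2) (Nat.le_add_right _ _)))
  · rintro (h1 | ⟨rfl, h2⟩)
    · have h2 : (i + 1) * m ≤ j * m := mul_le_mul_left h1 m
      have h3 : i * m + a < (i + 1) * m := by
        rw [Nat.succ_mul]; exact Nat.add_lt_add_left ha _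
      exact lt_of_lt_of_le h3 (le_trans h2 (Nat.le_add_right _ _))
    · exact Nat.add_lt_add_left h2 _

lemma Gp_chordal (q k : ℕ) (hk : 2 ≤ k) : (Gp q k).IsChordal := by
  apply chordal_of_peo (f := fun v : Fin q × Fin (k+1) => v.1.val * (k+1) + v.2.val)
  · intro u v h
    have h' : u.1.val * (k+1) + u.2.val = v.1.val * (k+1) + v.2.val := h
    have h1 : ¬(u.1.val * (k+1) + u.2.val < v.1.val * (k+1) + v.2.val) := by simp [h']
    have h2 : ¬(v.1.val * (k+1) + v.2.val < u.1.val * (k+1) + u.2.val) := by simp [h']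
    rw [keylt u.2.isLt v.2.isLt] at h1
    rw [keylt v.2.isLt u.2.isLt] at h2
    refine Prod.ext_iff.mpr ⟨Fin.ext ?_, Fin.ext ?_⟩ <;> omega
  · intro u v w h1 h2 auv auw
    rw [keylt u.2.isLt v.2.isLt] at h1
    rw [keylt v.2.isLt w.2.isLt] at h2
    have bu := u.2.isLt; have bv := v.2.isLt; have bw := w.2.isLt
    rcases auv with ⟨e1, e2, e3⟩ | ⟨e1, e2, e3⟩ | ⟨e1, e2, e3⟩
    · rcases auw with ⟨f1, f2, f3⟩ | ⟨f1, f2, f3⟩ | ⟨f1, f2, f3⟩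
      · -- both block
        have he := congrArg Fin.val e1
        have hf := congrArg Fin.val f1
        refine Or.inl ⟨Fin.ext (by omega), fun hc => ?_, ?_⟩
        · have := congrArg Fin.val hc; omega
        · rintro ⟨r1, r2, r3⟩; omega
      · exfalso; have he := congrArg Fin.val e1; omega
      · exfalso; have he := congrArg Fin.val e1; omega
    · exfalso
      rcases auw with ⟨f1, f2, f3⟩ | ⟨f1, f2, f3⟩ | ⟨f1, f2, f3⟩
      · have hf := congrArg Fin.val f1; omega
      · omega
      · omega
    · exfalso; omega

lemma Gp_reach (q k : ℕ) (hq : 2 ≤ q) (hk : 2 ≤ k) (v : Fin q × Fin (k+1)) :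
    (Gp q k).Reachable ((⟨0, by omega⟩ : Fin q), (⟨1, by omega⟩ : Fin (k+1))) v := by
  have hstep : ∀ (i : Fin q) (a : Fin (k+1)), a.val ≠ 1 →
      (Gp q k).Adj (i, ⟨1, by omega⟩) (i, a) := by
    intro i a h
    refine Or.inl ⟨rfl, fun hc => ?_, ?_⟩
    · have := congrArg Fin.val hc; simp at this; omega
    · rintro ⟨r1, r2, r3⟩; simp at r3; omega
  have hblock : ∀ n (i : Fin q), i.val = n →
      (Gp q k).Reachable ((⟨0, by omega⟩ : Fin q), (⟨1, by omega⟩ : Fin (k+1)))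
        (i, (⟨1, by omega⟩ : Fin (k+1))) := by
    intro n
    induction n with
    | zero =>
      intro i h
      have : i = (⟨0, by omega⟩ : Fin q) := Fin.ext h
      rw [this]
    | succ n ih =>
      intro i h
      have hn : n < q := by omega
      have r1 := ih ⟨n, hn⟩ rfl
      have a1 : (Gp q k).Adj (⟨n, hn⟩, ⟨1, by omega⟩) (⟨n, hn⟩, Fin.last k) :=
        hstep _ _ (by simp [Fin.val_last]; omega)
      have a2 : (Gp q k).Adj (⟨n, hn⟩, Fin.last k) (i, ⟨0, by omega⟩) :=
        Or.inr (Or.inl ⟨by simp [h], by simp [Fin.val_last], rfl⟩)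
      have a3 : (Gp q k).Adj (i, ⟨0, by omega⟩) (i, ⟨1, by omega⟩) := by
        refine Or.inl ⟨rfl, fun hc => ?_, ?_⟩
        · have := congrArg Fin.val hc; simp at this
        · rintro ⟨r1, r2, r3⟩; simp at r3; omega
      exact r1.trans (a1.reachable.trans (a2.reachable.trans a3.reachable))
  obtain ⟨i, a⟩ := v
  by_cases h : a.val = 1
  · have : a = (⟨1, by omega⟩ : Fin (k+1)) := Fin.ext h
    rw [this]
    exact hblock i.val i rfl
  · exact (hblock i.val i rfl).trans (hstep i a h).reachable

lemma connected_comap {V W : Type*} {G : SimpleGraph V} (e : W ≃ V) (hG : G.Connected) :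
    (SimpleGraph.comap ⇑e G).Connected := by
  haveI : Nonempty W := ⟨e.symm hG.nonempty.some⟩
  have key : ∀ a b : V, G.Reachable a b →
      (SimpleGraph.comap ⇑e G).Reachable (e.symm a) (e.symm b) := by
    intro a b hr
    refine hr.elim (fun p => ?_)
    induction p with
    | nil => exact SimpleGraph.Reachable.refl _
    | @cons x y z hadj p ih =>
      have hstep : (SimpleGraph.comap ⇑e G).Adj (e.symm x) (e.symm y) := by
        show G.Adj (e (e.symm x)) (e (e.symm y)); simpa using hadj
      exact hstep.reachable.trans (ih ⟨p⟩)
  refine ⟨fun x y => ?_⟩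
  have := key (e x) (e y) (hG.preconnected (e x) (e y))
  simpa using this

lemma chordal_comap {V W : Type*} {G : SimpleGraph V} (e : W ≃ V) (hG : G.IsChordal) :
    (SimpleGraph.comap ⇑e G).IsChordal := by
  intro v w hw hlen
  let F : SimpleGraph.comap ⇑e G →g G := ⟨e, fun h => h⟩
  have hw' : (w.map F).IsCycle := hw.map (fun x y hxy => e.injective hxy)
  have hlen' : 3 < (w.map F).length := by rwa [SimpleGraph.Walk.length_map]
  obtain ⟨a, b, hab, ha, hb, hnab⟩ := hG (w.map F) hw' hlen'
  rw [SimpleGraph.Walk.support_map] at ha hb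
  obtain ⟨x, hx, rfl⟩ := List.mem_map.mp ha
  obtain ⟨y, hy, rfl⟩ := List.mem_map.mp hb
  refine ⟨x, y, hab, hx, hy, ?_⟩
  intro hmem
  apply hnab
  rw [SimpleGraph.Walk.edges_map]
  exact List.mem_map.mpr ⟨s(x, y), hmem, by simp⟩

lemma degree_comap {V W : Type*} [Fintype V] [Fintype W] (G : SimpleGraph V) (e : W ≃ V)
    (x : W) : (SimpleGraph.comap ⇑e G).degree x = G.degree (e x) := by
  show ((SimpleGraph.comap ⇑e G).neighborFinset x).card = (G.neighborFinset (e x)).card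
  apply Finset.card_bij' (fun u _ => e u) (fun v _ => e.symm v)
  · intro u hu
    rw [SimpleGraph.mem_neighborFinset] at hu ⊢
    exact hu
  · intro v hv
    rw [SimpleGraph.mem_neighborFinset] at hv ⊢
    show G.Adj (e x) (e (e.symm v))
    simpa using hv
  · intro u _; simp
  · intro v _; simp

set_option maxHeartbeats 1000000 in
/-- For integers `q ≥ 2` and `k ≥ 2`, there exists a connected chordal graph of order
`q * (k+1)` and minimum degree `k` with exactly `q * C(k+1, 2) + 1` edges. -/
theorem stmt_15 (q k : ℕ) (hq : 2 ≤ q) (hk : 2 ≤ k) :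
    ∃ G : SimpleGraph (Fin (q * (k + 1))),
      G.Connected ∧ G.IsChordal ∧ G.minDegree = k ∧
      G.edgeFinset.card = q * Nat.choose (k + 1) 2 + 1 := by
  have hn : 0 < q * (k + 1) := by positivity
  set e : Fin q × Fin (k+1) ≃ Fin (q * (k+1)) := finProdFinEquiv with he
  set G' : SimpleGraph (Fin (q * (k+1))) := SimpleGraph.comap ⇑e.symm (Gp q k) with hG'
  haveI : Nonempty (Fin (q * (k+1))) := ⟨⟨0, hn⟩⟩
  have hdeg : ∀ x : Fin (q * (k+1)), G'.degree x = (Gp q k).degree (e.symm x) :=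
    fun x => degree_comap (Gp q k) e.symm x
  refine ⟨G', ?_, ?_, ?_, ?_⟩
  · -- Connected
    refine connected_comap e.symm ?_
    haveI : Nonempty (Fin q × Fin (k+1)) := ⟨(⟨0, by omega⟩, ⟨1, by omega⟩)⟩
    exact ⟨fun u v => ((Gp_reach q k hq hk u).symm).trans (Gp_reach q k hq hk v)⟩
  · exact chordal_comap e.symm (Gp_chordal q k hk)
  · -- minDegree
    apply le_antisymm
    · have h1 := G'.minDegree_le_degree (e ((⟨0, by omega⟩ : Fin q), (⟨0, by omega⟩ : Fin (k+1))))
      rw [hdeg, Equiv.symm_apply_apply, Gp_degree q k hq hk] at h1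
      rw [if_neg (by simp [Prod.ext_iff, Fin.ext_iff]; omega),
        if_neg (by simp [Prod.ext_iff, Fin.ext_iff]; omega)] at h1
      simp at h1; exact h1
    · apply SimpleGraph.le_minDegree_of_forall_le_degree
      intro x
      have := hdeg x
      rw [Gp_degree q k hq hk] at this
      refine le_of_le_of_eq ?_ this.symm
      split_ifs <;> omega
  · -- edge count
    have hsum : ∑ x : Fin (q * (k+1)), G'.degree x = (q * (k+1)) * k + 2 := by
      calc ∑ x : Fin (q * (k+1)), G'.degree x
          = ∑ x : Fin (q * (k+1)), (Gp q k).degree (e.symm x) := by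
            exact Finset.sum_congr rfl fun x _ => hdeg x
        _ = ∑ v : Fin q × Fin (k+1), (Gp q k).degree v :=
            Fintype.sum_equiv e.symm _ _ (fun x => rfl)
        _ = ∑ v : Fin q × Fin (k+1),
              (k + (if v = ((⟨0, by omega⟩ : Fin q), Fin.last k) then 1 else 0)
                + (if v = ((⟨q - 1, by omega⟩ : Fin q), (⟨0, by omega⟩ : Fin (k+1))) then 1 else 0)) :=
            Finset.sum_congr rfl fun v _ => Gp_degree q k hq hk v
        _ = (q * (k+1)) * k + 2 := by
            rw [Finset.sum_add_distrib, Finset.sum_add_distrib, Finset.sum_const,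
              Finset.sum_ite_eq', Finset.sum_ite_eq']
            simp [Fintype.card_prod, mul_comm]
    have h2card := SimpleGraph.sum_degrees_eq_twice_card_edges G'
    have hch : (k+1) * k = 2 * ((k+1).choose 2) := by
      rw [Nat.choose_two_right, Nat.add_sub_cancel]
      have hdvd : 2 ∣ (k+1) * k := by
        rw [mul_comm]; exact (Nat.even_mul_succ_self k).two_dvd
      rw [Nat.mul_div_cancel' hdvd]
    have hE : 2 * G'.edgeFinset.card = 2 * (q * ((k+1).choose 2) + 1) := by
      rw [← h2card, hsum]
      calc q * (k+1) * k + 2 = q * ((k+1) * k) + 2 := by ring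
        _ = q * (2 * ((k+1).choose 2)) + 2 := by rw [hch]
        _ = 2 * (q * ((k+1).choose 2) + 1) := by ring
    exact Nat.eq_of_mul_eq_mul_left (by norm_num) hE
end
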